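/- Let S ⊆ M be definable and let f : S → M be a function whose graph is definable. Then there are a finite set X ⊆ S and finitely many pairwise disjoint definable sets U₁,…,U_k, each a finite union of near-intervals, such that S = X ∪ U₁ ∪ ⋯ ∪ U_k and for each ℓ ≤ k there are α_ℓ ∈ F and c_ℓ ∈ M with f(x) = α_ℓ x + c_ℓ for all x ∈ U_ℓ. -/

import Mathlib

open FirstOrder Language Set

/-- Functions of the language of ordered `F`-vector spaces with a predicate:
`+`, `-`, `0`, `1`, and scalar multiplication by each element of `F`. -/
inductive LPFunc (F : Type) : ℕ → Type
  | add : LPFunc F 2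
  | neg : LPFunc F 1
  | zero : LPFunc F 0
  | one : LPFunc F 0
  | smul : F → LPFunc F 1

/-- Relations: the order `<` and the unary predicate `Q`. -/
inductive LPRel : ℕ → Type
  | lt : LPRel 2
  | q : LPRel 1

/-- The language `L_P`. -/
def LP (F : Type) : Language := ⟨LPFunc F, LPRel⟩

variable (F M : Type) [Field F] [LinearOrder F] [IsStrictOrderedRing F] [AddCommGroup M] [LinearOrder M] [IsOrderedAddMonoid M] [Module F M]

/-- The natural `L_P`-structure on an ordered `F`-vector space `M` with
distinguished element `one` and predicate `Q`. -/
def LPStruc (one : M) (Q : Set M) : (LP F).Structure M where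
  funMap := fun {n} f x =>
    match n, f with
    | _, LPFunc.add => x 0 + x 1
    | _, LPFunc.neg => -(x 0)
    | _, LPFunc.zero => 0
    | _, LPFunc.one => one
    | _, LPFunc.smul c => c • x 0
  RelMap := fun {n} r x =>
    match n, r with
    | _, LPRel.lt => x 0 < x 1
    | _, LPRel.q => x 0 ∈ Q

/-- A subset of `N^n` is definable (with parameters from `N`). -/
def DefinableIn (L : Language) (N : Type) [L.Structure N] {n : ℕ} (S : Set (Fin n → N)) : Prop :=
  Set.Definable (Set.univ : Set N) L S

/-- A subset of `N` is definable (with parameters from `N`). -/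
def Definable1In (L : Language) (N : Type) [L.Structure N] (S : Set N) : Prop :=
  DefinableIn L N {x : Fin 1 → N | x 0 ∈ S}

/-- A function `N^n → N` is definable if its graph is definable. -/
def DefinableFunIn (L : Language) (N : Type) [L.Structure N] {n : ℕ}
    (f : (Fin n → N) → N) : Prop :=
  DefinableIn L N {x : Fin (n + 1) → N | x (Fin.last n) = f (fun i => x (Fin.castSucc i))}

/-- `S ⊆ N` is `P`-small: covered by the image of `Pⁿ` under a definable function. -/
def SmallIn (L : Language) (N : Type) [L.Structure N] (P : Set N) (S : Set N) : Prop :=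
  ∃ (n : ℕ) (f : (Fin n → N) → N), DefinableFunIn L N f ∧
    S ⊆ f '' {x : Fin n → N | ∀ i, x i ∈ P}

/-- Definability in the pair of ordered vector spaces. -/
def POVSDefinable (one : M) (Q : Set M) {n : ℕ} (S : Set (Fin n → M)) : Prop :=
  letI := LPStruc F M one Q
  DefinableIn (LP F) M S

/-- Definability of a unary set in the pair of ordered vector spaces. -/
def POVSDefinable1 (one : M) (Q : Set M) (S : Set M) : Prop :=
  letI := LPStruc F M one Q
  Definable1In (LP F) M S

/-- Smallness in the pair of ordered vector spaces. -/
def POVSSmall (one : M) (Q : Set M) (S : Set M) : Prop :=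
  letI := LPStruc F M one Q
  SmallIn (LP F) M Q S

/-- The embedding of `M` into `M ∪ {-∞, +∞}`. -/
def toExt (x : M) : WithBot (WithTop M) := ((x : WithTop M) : WithBot (WithTop M))

/-- The open interval `(a,b)` with endpoints from `M ∪ {-∞, +∞}`, as a subset of `M`. -/
def extIoo (a b : WithBot (WithTop M)) : Set M := {x : M | a < toExt M x ∧ toExt M x < b}

/-- The union of the cosets `c + Q` for `c ∈ C`. -/
def cosetUnion (Q : Set M) (C : Finset M) : Set M := ⋃ c ∈ C, {x : M | x - c ∈ Q}

/-- A near-interval: a nonempty set of the form `(a,b) ∩ C` or `(a,b) \ C`, where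
`a < b` in `M ∪ {-∞,+∞}` and `C` is a finite union of cosets of `Q`. -/
def NearInterval (Q : Set M) (S : Set M) : Prop :=
  S.Nonempty ∧ ∃ (a b : WithBot (WithTop M)) (C : Finset M), a < b ∧
    (S = extIoo M a b ∩ cosetUnion M Q C ∨ S = extIoo M a b \ cosetUnion M Q C)
section Dev
variable {F M}

open FirstOrder Language Set

section Sem

inductive LKind | keq | kpos | kinq | knq
deriving DecidableEq

structure Lit (F M γ : Type) where
  k : LKind
  c : γ → F
  m : M

variable {γ δ : Type} [Fintype γ] [Fintype δ]

def aeval (c : γ → F) (m : M) (x : γ → M) : M := (∑ i, c i • x i) + m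

def Lit.holds (Q : Set M) (L : Lit F M γ) (x : γ → M) : Prop :=
  match L.k with
  | LKind.keq => aeval L.c L.m x = 0
  | LKind.kpos => 0 < aeval L.c L.m x
  | LKind.kinq => aeval L.c L.m x ∈ Q
  | LKind.knq => aeval L.c L.m x ∉ Q

def cellSet (Q : Set M) (ls : List (Lit F M γ)) : Set (γ → M) := {x | ∀ L ∈ ls, L.holds Q x}

variable (F) in
def InD (Q : Set M) (S : Set (γ → M)) : Prop :=
  ∃ lss : List (List (Lit F M γ)), S = {x | ∃ ls ∈ lss, x ∈ cellSet Q ls}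

variable {Q : Set M}

lemma aeval_neg (c : γ → F) (m : M) (x : γ → M) : aeval (fun i => -(c i)) (-m) x = -(aeval c m x) := by
  simp [aeval, neg_add, ← Finset.sum_neg_distrib, neg_smul, add_comm]

lemma cellSet_nil : cellSet Q ([] : List (Lit F M γ)) = univ := by
  ext x; simp [cellSet]

lemma cellSet_append (ls ms : List (Lit F M γ)) :
    cellSet Q (ls ++ ms) = cellSet Q ls ∩ cellSet Q ms := by
  ext x; simp [cellSet, or_imp, forall_and]

lemma InD.union {S T : Set (γ → M)} (hS : InD F Q S) (hT : InD F Q T) : InD F Q (S ∪ T) := by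
  obtain ⟨ls, rfl⟩ := hS; obtain ⟨ms, rfl⟩ := hT
  refine ⟨ls ++ ms, ?_⟩
  ext x; simp [or_and_right, exists_or]

lemma InD.inter {S T : Set (γ → M)} (hS : InD F Q S) (hT : InD F Q T) : InD F Q (S ∩ T) := by
  obtain ⟨lss, rfl⟩ := hS; obtain ⟨mss, rfl⟩ := hT
  refine ⟨lss.flatMap (fun ls => mss.map (fun ms => ls ++ ms)), ?_⟩
  ext x
  simp only [mem_inter_iff, mem_setOf_eq, List.mem_flatMap, List.mem_map]
  constructor
  · rintro ⟨⟨ls, hls, h1⟩, ⟨ms, hms, h2⟩⟩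
    exact ⟨ls ++ ms, ⟨ls, hls, ms, hms, rfl⟩, by rw [cellSet_append]; exact ⟨h1, h2⟩⟩
  · rintro ⟨_, ⟨ls, hls, ms, hms, rfl⟩, h⟩
    rw [cellSet_append] at h
    exact ⟨⟨ls, hls, h.1⟩, ⟨ms, hms, h.2⟩⟩

def Lit.negList (L : Lit F M γ) : List (Lit F M γ) :=
  match L.k with
  | LKind.keq => [⟨LKind.kpos, L.c, L.m⟩, ⟨LKind.kpos, fun i => -(L.c i), -L.m⟩]
  | LKind.kpos => [⟨LKind.keq, L.c, L.m⟩, ⟨LKind.kpos, fun i => -(L.c i), -L.m⟩]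
  | LKind.kinq => [⟨LKind.knq, L.c, L.m⟩]
  | LKind.knq => [⟨LKind.kinq, L.c, L.m⟩]

lemma Lit.negList_spec (L : Lit F M γ) (x : γ → M) :
    (¬ L.holds Q x) ↔ ∃ L' ∈ L.negList, L'.holds Q x := by
  obtain ⟨k, c, m⟩ := L
  have hneg : (0 < aeval (fun i => -(c i)) (-m) x) ↔ aeval c m x < 0 := by
    rw [aeval_neg]; exact neg_pos
  cases k <;>
    simp only [Lit.holds, Lit.negList, List.mem_cons, List.not_mem_nil, or_false,
      exists_eq_or_imp, exists_eq_left, hneg, not_not]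
  · constructor
    · intro h
      rcases lt_trichotomy (aeval c m x) 0 with h' | h' | h'
      · exact Or.inr h'
      · exact absurd h' h
      · exact Or.inl h'
    · rintro (h | h) <;> intro he <;> rw [he] at h <;> exact lt_irrefl 0 h
  · constructor
    · intro h
      rcases lt_trichotomy (aeval c m x) 0 with h' | h' | h'
      · exact Or.inr h'
      · exact Or.inl h'
      · exact absurd h' h
    · rintro (h | h) <;> intro hp
      · rw [h] at hp; exact lt_irrefl 0 hp
      · exact lt_asymm h hp

lemma InD_cell (ls : List (Lit F M γ)) : InD F Q (cellSet Q ls) :=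
  ⟨[ls], by ext x; simp⟩

lemma InD_empty : InD F Q (∅ : Set (γ → M)) := ⟨[], by ext x; simp⟩

lemma InD_univ : InD F Q (univ : Set (γ → M)) := ⟨[ [] ], by ext x; simp [cellSet_nil]⟩

lemma InD_cell_compl (ls : List (Lit F M γ)) : InD F Q (cellSet Q ls)ᶜ := by
  induction ls with
  | nil => rw [cellSet_nil, compl_univ]; exact InD_empty
  | cons L ls ih =>
      have : (cellSet Q (L :: ls))ᶜ = {x : γ → M | ¬ L.holds Q x} ∪ (cellSet Q ls)ᶜ := by
        ext x
        simp only [cellSet, mem_compl_iff, mem_setOf_eq, mem_union, List.forall_mem_cons]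
        tauto
      rw [this]
      refine InD.union ?_ ih
      refine ⟨L.negList.map (fun L' => [L']), ?_⟩
      ext x
      simp only [mem_setOf_eq, L.negList_spec (Q := Q), List.mem_map]
      constructor
      · rintro ⟨L', hL', h⟩
        exact ⟨[L'], ⟨L', hL', rfl⟩, by simp [cellSet, h]⟩
      · rintro ⟨l, ⟨L', hL', rfl⟩, h⟩
        exact ⟨L', hL', by simpa [cellSet] using h⟩

lemma InD.compl {S : Set (γ → M)} (hS : InD F Q S) : InD F Q Sᶜ := by
  obtain ⟨lss, rfl⟩ := hS
  induction lss with
  | nil => simpa using (InD_univ : InD F Q (univ : Set (γ → M)))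
  | cons ls lss ih =>
      have : ({x : γ → M | ∃ l ∈ ls :: lss, x ∈ cellSet Q l})ᶜ
          = (cellSet Q ls)ᶜ ∩ ({x : γ → M | ∃ l ∈ lss, x ∈ cellSet Q l})ᶜ := by
        ext x; simp [not_or]
      rw [this]
      exact (InD_cell_compl ls).inter ih

lemma InD.sdiff {S T : Set (γ → M)} (hS : InD F Q S) (hT : InD F Q T) : InD F Q (S \ T) :=
  hS.inter hT.compl

end Sem
section Comb
variable {Q : Submodule F M} {one : M}

lemma exists_list_max (l : List M) : l = [] ∨ ∃ a ∈ l, ∀ x ∈ l, x ≤ a := by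
  induction l with
  | nil => exact Or.inl rfl
  | cons x l ih =>
      refine Or.inr ?_
      rcases ih with rfl | ⟨a, ha, hmax⟩
      · exact ⟨x, by simp⟩
      · rcases le_total x a with h | h
        · exact ⟨a, List.mem_cons_of_mem _ ha, by
            intro y hy; rcases List.mem_cons.1 hy with rfl | hy
            exacts [h, hmax y hy]⟩
        · exact ⟨x, List.mem_cons_self, by
            intro y hy; rcases List.mem_cons.1 hy with rfl | hy
            exacts [le_refl _, (hmax y hy).trans h]⟩

lemma exists_list_min (l : List M) : l = [] ∨ ∃ a ∈ l, ∀ x ∈ l, a ≤ x := by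
  rcases exists_list_max (l.map (fun x => -x)) with h | ⟨a, ha, hmax⟩
  · exact Or.inl (by simpa using h)
  · simp only [List.mem_map] at ha
    obtain ⟨b, hb, rfl⟩ := ha
    refine Or.inr ⟨b, hb, fun x hx => ?_⟩
    have := hmax (-x) (List.mem_map.2 ⟨x, hx, rfl⟩)
    simpa using this

lemma interval_inside (hone : 0 < one) (Ls Us : List M)
    (h : ∀ l ∈ Ls, ∀ u ∈ Us, l < u) :
    ∃ a b : M, a < b ∧ ∀ y, a < y → y < b → (∀ l ∈ Ls, l < y) ∧ (∀ u ∈ Us, y < u) := by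
  rcases exists_list_max Ls with rfl | ⟨l₀, hl₀, hmax⟩
  · rcases exists_list_min Us with rfl | ⟨u₀, hu₀, hmin⟩
    · exact ⟨0, one, hone, fun y _ _ => ⟨by simp, by simp⟩⟩
    · exact ⟨u₀ - one, u₀, sub_lt_self _ hone, fun y _ hy =>
        ⟨by simp, fun u hu => lt_of_lt_of_le hy (hmin u hu)⟩⟩
  · rcases exists_list_min Us with rfl | ⟨u₀, hu₀, hmin⟩
    · exact ⟨l₀, l₀ + one, lt_add_of_pos_right _ hone, fun y hy _ =>
        ⟨fun l hl => lt_of_le_of_lt (hmax l hl) hy, by simp⟩⟩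
    · exact ⟨l₀, u₀, h l₀ hl₀ u₀ hu₀, fun y hy hy' =>
        ⟨fun l hl => lt_of_le_of_lt (hmax l hl) hy,
         fun u hu => lt_of_lt_of_le hy' (hmin u hu)⟩⟩

lemma coset_dense (hQdense : ∀ a b : M, a < b → ∃ q ∈ Q, a < q ∧ q < b)
    (c a b : M) (hab : a < b) : ∃ y, a < y ∧ y < b ∧ y - c ∈ Q := by
  obtain ⟨q, hq, h1, h2⟩ := hQdense (a - c) (b - c) (sub_lt_sub_right hab c)
  exact ⟨q + c, sub_lt_iff_lt_add.1 h1, by simpa using add_lt_add_left h2 c, by simpa using hq⟩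

lemma exists_offclass (hQproper : (Q : Set M) ≠ Set.univ) (rs : List M) :
    ∃ c : M, ∀ r ∈ rs, c - r ∉ Q := by
  obtain ⟨d, hd⟩ : ∃ d, d ∉ Q := by
    by_contra h
    push_neg at h
    exact hQproper (Set.eq_univ_of_forall h)
  by_contra h
  push_neg at h
  have hch : ∀ α : F, ∃ r ∈ rs.toFinset, α • d - r ∈ Q := by
    intro α
    obtain ⟨r, hr, hrQ⟩ := h (α • d)
    exact ⟨r, List.mem_toFinset.2 hr, hrQ⟩
  choose r hr hrQ using hch
  have : ∃ α β : F, α ≠ β ∧ (⟨r α, hr α⟩ : {x // x ∈ rs.toFinset}) = ⟨r β, hr β⟩ :=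
    Finite.exists_ne_map_eq_of_infinite _
  obtain ⟨α, β, hne, heq⟩ := this
  have hreq : r α = r β := congrArg Subtype.val heq
  have : (α - β) • d ∈ Q := by
    have := Q.sub_mem (hrQ α) (hrQ β)
    rw [hreq] at this
    simpa [sub_smul] using this
  rw [Q.smul_mem_iff (sub_ne_zero.2 hne)] at this
  exact hd this

lemma avoid_cosets (hQdense : ∀ a b : M, a < b → ∃ q ∈ Q, a < q ∧ q < b)
    (hQproper : (Q : Set M) ≠ Set.univ) (a b : M) (hab : a < b) (rs : List M) :
    ∃ y, a < y ∧ y < b ∧ ∀ r ∈ rs, y - r ∉ Q := by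
  obtain ⟨c, hc⟩ := exists_offclass hQproper rs
  obtain ⟨y, h1, h2, hyc⟩ := coset_dense hQdense c a b hab
  refine ⟨y, h1, h2, fun r hr hyr => hc r hr ?_⟩
  have : (c - y) + (y - r) ∈ Q := Q.add_mem (by simpa using Q.neg_mem hyc) hyr
  simpa using this

lemma exists_solution (hone : 0 < one)
    (hQdense : ∀ a b : M, a < b → ∃ q ∈ Q, a < q ∧ q < b)
    (hQproper : (Q : Set M) ≠ Set.univ)
    (Ls Us ss rs : List M)
    (hLU : ∀ l ∈ Ls, ∀ u ∈ Us, l < u)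
    (hss : ∀ s ∈ ss, ∀ s' ∈ ss, s - s' ∈ Q)
    (hsr : ∀ s ∈ ss, ∀ r ∈ rs, s - r ∉ Q) :
    ∃ y, (∀ l ∈ Ls, l < y) ∧ (∀ u ∈ Us, y < u) ∧ (∀ s ∈ ss, y - s ∈ Q) ∧
      (∀ r ∈ rs, y - r ∉ Q) := by
  obtain ⟨a, b, hab, hin⟩ := interval_inside hone Ls Us hLU
  cases ss with
  | nil =>
      obtain ⟨y, h1, h2, h3⟩ := avoid_cosets hQdense hQproper a b hab rs
      exact ⟨y, (hin y h1 h2).1, (hin y h1 h2).2, by simp, h3⟩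
  | cons s ss' =>
      obtain ⟨y, h1, h2, hys⟩ := coset_dense hQdense s a b hab
      refine ⟨y, (hin y h1 h2).1, (hin y h1 h2).2, ?_, ?_⟩
      · intro s' hs'
        have : (y - s) + (s - s') ∈ Q := Q.add_mem hys (hss s (List.mem_cons_self) s' hs')
        simpa using this
      · intro r hr hyr
        refine hsr s (List.mem_cons_self) r hr ?_
        have : (s - y) + (y - r) ∈ Q := Q.add_mem (by simpa using Q.neg_mem hys) hyr
        simpa using this

lemma exists_ub (hone : 0 < one) (Us : List M) (y : M) (h : ∀ u ∈ Us, y < u) :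
    ∃ b, y < b ∧ ∀ u ∈ Us, b ≤ u := by
  induction Us with
  | nil => exact ⟨y + one, lt_add_of_pos_right _ hone, by simp⟩
  | cons u us ih =>
      obtain ⟨b, hb, hble⟩ := ih (fun v hv => h v (List.mem_cons_of_mem _ hv))
      refine ⟨min b u, lt_min hb (h u (List.mem_cons_self)), ?_⟩
      intro v hv
      rcases List.mem_cons.1 hv with rfl | hv
      · exact min_le_right _ _
      · exact le_trans (min_le_left _ _) (hble v hv)

lemma second_solution (hone : 0 < one)
    (hQdense : ∀ a b : M, a < b → ∃ q ∈ Q, a < q ∧ q < b)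
    (Ls Us ss rs : List M) (y : M)
    (h1 : ∀ l ∈ Ls, l < y) (h2 : ∀ u ∈ Us, y < u) (h3 : ∀ s ∈ ss, y - s ∈ Q)
    (h4 : ∀ r ∈ rs, y - r ∉ Q) :
    ∃ y', y' ≠ y ∧ (∀ l ∈ Ls, l < y') ∧ (∀ u ∈ Us, y' < u) ∧ (∀ s ∈ ss, y' - s ∈ Q) ∧
      (∀ r ∈ rs, y' - r ∉ Q) := by
  obtain ⟨b, hyb, hble⟩ := exists_ub hone Us y h2
  obtain ⟨y', hy1, hy2, hy'y⟩ := coset_dense hQdense y y b hyb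
  refine ⟨y', ne_of_gt hy1, fun l hl => lt_trans (h1 l hl) hy1,
    fun u hu => lt_of_lt_of_le hy2 (hble u hu), ?_, ?_⟩
  · intro s hs
    have : (y' - y) + (y - s) ∈ Q := Q.add_mem hy'y (h3 s hs)
    simpa using this
  · intro r hr hyr
    refine h4 r hr ?_
    have : (y - y') + (y' - r) ∈ Q := Q.add_mem (by simpa using Q.neg_mem hy'y) hyr
    simpa using this

lemma smul_lt_smul_iff_sm (hsmul : ∀ (c : F) (x : M), 0 < c → 0 < x → 0 < c • x)
    {α : F} (hα : 0 < α) {x y : M} : α • x < α • y ↔ x < y := by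
  have mono : ∀ u v : M, u < v → α • u < α • v := by
    intro u v huv
    have := hsmul α (v - u) hα (sub_pos.2 huv)
    rw [smul_sub] at this
    exact sub_pos.1 this
  constructor
  · intro h
    by_contra h'
    rcases eq_or_lt_of_le (not_lt.1 h') with rfl | h''
    · exact lt_irrefl _ h
    · exact lt_asymm h (mono _ _ h'')
  · exact mono x y

lemma smul_pos_iff_sm (hsmul : ∀ (c : F) (x : M), 0 < c → 0 < x → 0 < c • x)
    {α : F} (hα : 0 < α) {z : M} : 0 < α • z ↔ 0 < z := by
  have := smul_lt_smul_iff_sm hsmul hα (x := 0) (y := z)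
  simpa using this

end Comb

section Proj
variable {γ δ : Type} [Fintype γ] [Fintype δ]
variable {Q : Submodule F M} {one : M}

/-- coefficient of the projected variable -/
def yc (L : Lit F M (γ ⊕ Fin 1)) : F := L.c (Sum.inr 0)

def cres (L : Lit F M (γ ⊕ Fin 1)) : γ → F := fun i => L.c (Sum.inl i)

def bnd (L : Lit F M (γ ⊕ Fin 1)) : (γ → F) × M :=
  (fun i => (-(yc L)⁻¹) * L.c (Sum.inl i), (-(yc L)⁻¹) • L.m)

def restrOf (L : Lit F M (γ ⊕ Fin 1)) : Option (Lit F M γ) :=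
  if yc L = 0 then some ⟨L.k, cres L, L.m⟩ else none

def lowOf (L : Lit F M (γ ⊕ Fin 1)) : Option ((γ → F) × M) :=
  match L.k with
  | LKind.kpos => if 0 < yc L then some (bnd L) else none
  | _ => none

def upOf (L : Lit F M (γ ⊕ Fin 1)) : Option ((γ → F) × M) :=
  match L.k with
  | LKind.kpos => if yc L < 0 then some (bnd L) else none
  | _ => none

def sOf (L : Lit F M (γ ⊕ Fin 1)) : Option ((γ → F) × M) :=
  match L.k with
  | LKind.kinq => if yc L = 0 then none else some (bnd L)
  | _ => none

def rOf (L : Lit F M (γ ⊕ Fin 1)) : Option ((γ → F) × M) :=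
  match L.k with
  | LKind.knq => if yc L = 0 then none else some (bnd L)
  | _ => none

def eqOf (L : Lit F M (γ ⊕ Fin 1)) : Option ((γ → F) × M) :=
  match L.k with
  | LKind.keq => if yc L = 0 then none else some (bnd L)
  | _ => none

lemma aeval_smul (a : F) (c : γ → F) (m : M) (x : γ → M) :
    aeval (fun i => a * c i) (a • m) x = a • aeval c m x := by
  simp [aeval, smul_add, Finset.smul_sum, mul_smul]

lemma aeval_sub (c d : γ → F) (m m' : M) (x : γ → M) :
    aeval (fun i => c i - d i) (m - m') x = aeval c m x - aeval d m' x := by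
  simp only [aeval, sub_smul, Finset.sum_sub_distrib]
  abel

lemma aeval_elim (c : (γ ⊕ Fin 1) → F) (m : M) (x : γ → M) (y : M) :
    aeval c m (Sum.elim x (fun _ => y)) =
      c (Sum.inr 0) • y + aeval (fun i => c (Sum.inl i)) m x := by
  simp only [aeval, Fintype.sum_sum_type, Fin.sum_univ_one, Sum.elim_inl, Sum.elim_inr]
  abel

lemma aeval_bnd (L : Lit F M (γ ⊕ Fin 1)) (x : γ → M) :
    aeval (bnd L).1 (bnd L).2 x = (-(yc L)⁻¹) • aeval (cres L) L.m x := by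
  simpa [bnd, cres] using aeval_smul (-(yc L)⁻¹) (cres L) L.m x

lemma smul_cancel_iff {α : F} (hα : α ≠ 0) {u v : M} : α • u = α • v ↔ u = v := by
  constructor
  · intro h
    have := congrArg (fun z => α⁻¹ • z) h
    simpa [smul_smul, inv_mul_cancel₀ hα] using this
  · rintro rfl; rfl

variable (hsmul : ∀ (c : F) (x : M), 0 < c → 0 < x → 0 < c • x)

lemma restrOf_some {L : Lit F M (γ ⊕ Fin 1)} {L' : Lit F M γ} (h : restrOf L = some L') :
    yc L = 0 ∧ L' = ⟨L.k, cres L, L.m⟩ := by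
  rw [restrOf] at h
  split_ifs at h with hyc
  exact ⟨hyc, (Option.some_injective _ h).symm⟩

lemma lowOf_some {L : Lit F M (γ ⊕ Fin 1)} {p : (γ → F) × M} (h : lowOf L = some p) :
    L.k = LKind.kpos ∧ 0 < yc L ∧ p = bnd L := by
  obtain ⟨k, c, m⟩ := L
  cases k <;> simp only [lowOf] at h <;> try exact absurd h.symm (Option.some_ne_none p)
  split_ifs at h with hyc
  exact ⟨rfl, hyc, (Option.some_injective _ h).symm⟩

lemma upOf_some {L : Lit F M (γ ⊕ Fin 1)} {p : (γ → F) × M} (h : upOf L = some p) :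
    L.k = LKind.kpos ∧ yc L < 0 ∧ p = bnd L := by
  obtain ⟨k, c, m⟩ := L
  cases k <;> simp only [upOf] at h <;> try exact absurd h.symm (Option.some_ne_none p)
  split_ifs at h with hyc
  exact ⟨rfl, hyc, (Option.some_injective _ h).symm⟩

lemma sOf_some {L : Lit F M (γ ⊕ Fin 1)} {p : (γ → F) × M} (h : sOf L = some p) :
    L.k = LKind.kinq ∧ yc L ≠ 0 ∧ p = bnd L := by
  obtain ⟨k, c, m⟩ := L
  cases k <;> simp only [sOf] at h <;> try exact absurd h.symm (Option.some_ne_none p)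
  split_ifs at h with hyc
  exact ⟨rfl, hyc, (Option.some_injective _ h).symm⟩

lemma rOf_some {L : Lit F M (γ ⊕ Fin 1)} {p : (γ → F) × M} (h : rOf L = some p) :
    L.k = LKind.knq ∧ yc L ≠ 0 ∧ p = bnd L := by
  obtain ⟨k, c, m⟩ := L
  cases k <;> simp only [rOf] at h <;> try exact absurd h.symm (Option.some_ne_none p)
  split_ifs at h with hyc
  exact ⟨rfl, hyc, (Option.some_injective _ h).symm⟩

lemma eqOf_some {L : Lit F M (γ ⊕ Fin 1)} {p : (γ → F) × M} (h : eqOf L = some p) :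
    L.k = LKind.keq ∧ yc L ≠ 0 ∧ p = bnd L := by
  obtain ⟨k, c, m⟩ := L
  cases k <;> simp only [eqOf] at h <;> try exact absurd h.symm (Option.some_ne_none p)
  split_ifs at h with hyc
  exact ⟨rfl, hyc, (Option.some_injective _ h).symm⟩

lemma classify (L : Lit F M (γ ⊕ Fin 1)) :
    (∃ L', restrOf L = some L') ∨ (∃ p, lowOf L = some p) ∨ (∃ p, upOf L = some p) ∨
    (∃ p, sOf L = some p) ∨ (∃ p, rOf L = some p) ∨ (∃ p, eqOf L = some p) := by
  by_cases hyc : yc L = 0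
  · exact Or.inl ⟨_, by rw [restrOf, if_pos hyc]⟩
  · obtain ⟨k, c, m⟩ := L
    cases k
    · exact Or.inr (Or.inr (Or.inr (Or.inr (Or.inr ⟨_, by rw [eqOf, if_neg hyc]⟩))))
    · rcases lt_or_gt_of_ne hyc with h | h
      · exact Or.inr (Or.inr (Or.inl ⟨_, by rw [upOf, if_pos h]⟩))
      · exact Or.inr (Or.inl ⟨_, by rw [lowOf, if_pos h]⟩)
    · exact Or.inr (Or.inr (Or.inr (Or.inl ⟨_, by rw [sOf, if_neg hyc]⟩)))
    · exact Or.inr (Or.inr (Or.inr (Or.inr (Or.inl ⟨_, by rw [rOf, if_neg hyc]⟩))))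

section Specs
variable (hsmul : ∀ (c : F) (x : M), 0 < c → 0 < x → 0 < c • x)

lemma key_decomp (L : Lit F M (γ ⊕ Fin 1)) (x : γ → M) (y : M) :
    aeval L.c L.m (Sum.elim x (fun _ => y)) = yc L • y + aeval (cres L) L.m x := by
  rw [aeval_elim]; rfl

lemma hcalc {α : F} (hα : α ≠ 0) (t : M) : α • ((-α⁻¹) • t) = -t := by
  rw [smul_smul, mul_neg, mul_inv_cancel₀ hα, neg_smul, one_smul]

lemma restr_spec {L : Lit F M (γ ⊕ Fin 1)} {L' : Lit F M γ} (h : restrOf L = some L')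
    (x : γ → M) (y : M) :
    (L.holds (Q : Set M) (Sum.elim x (fun _ => y)) ↔ L'.holds (Q : Set M) x) := by
  obtain ⟨hyc, rfl⟩ := restrOf_some h
  have hyc' : yc L • y = 0 := by rw [hyc, zero_smul]
  cases hk : L.k <;>
    simp only [Lit.holds, hk, key_decomp, hyc', zero_add] <;> exact Iff.rfl

lemma eq_spec {L : Lit F M (γ ⊕ Fin 1)} {p : (γ → F) × M} (h : eqOf L = some p)
    (x : γ → M) (y : M) :
    (L.holds (Q : Set M) (Sum.elim x (fun _ => y)) ↔ y = aeval p.1 p.2 x) := by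
  obtain ⟨hk, hyc, rfl⟩ := eqOf_some h
  rw [aeval_bnd]
  set α := yc L
  set t := aeval (cres L) L.m x with ht
  simp only [Lit.holds, hk, key_decomp, ← ht]
  constructor
  · intro h0
    have h1 : α • y = -t := eq_neg_of_add_eq_zero_left h0
    rw [← hcalc hyc t] at h1
    exact smul_cancel_iff hyc |>.1 h1
  · rintro rfl
    rw [hcalc hyc]
    exact neg_add_cancel t

lemma low_spec (hsmul : ∀ (c : F) (x : M), 0 < c → 0 < x → 0 < c • x)
    {L : Lit F M (γ ⊕ Fin 1)} {p : (γ → F) × M} (h : lowOf L = some p)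
    (x : γ → M) (y : M) :
    (L.holds (Q : Set M) (Sum.elim x (fun _ => y)) ↔ aeval p.1 p.2 x < y) := by
  obtain ⟨hk, hyc, rfl⟩ := lowOf_some h
  rw [aeval_bnd]
  set α := yc L
  set t := aeval (cres L) L.m x with ht
  simp only [Lit.holds, hk, key_decomp, ← ht]
  have h1 : (0 < α • y + t) ↔ α • ((-α⁻¹) • t) < α • y := by
    rw [hcalc (ne_of_gt hyc), neg_lt_iff_pos_add, add_comm]
  rw [h1, smul_lt_smul_iff_sm hsmul hyc]

lemma up_spec (hsmul : ∀ (c : F) (x : M), 0 < c → 0 < x → 0 < c • x)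
    {L : Lit F M (γ ⊕ Fin 1)} {p : (γ → F) × M} (h : upOf L = some p)
    (x : γ → M) (y : M) :
    (L.holds (Q : Set M) (Sum.elim x (fun _ => y)) ↔ y < aeval p.1 p.2 x) := by
  obtain ⟨hk, hyc, rfl⟩ := upOf_some h
  rw [aeval_bnd]
  set α := yc L
  set t := aeval (cres L) L.m x with ht
  simp only [Lit.holds, hk, key_decomp, ← ht]
  have hβ : (0:F) < -α := neg_pos.2 hyc
  have hrw : (-α) • ((-α⁻¹) • t) = t := by
    rw [smul_smul, neg_mul_neg, mul_inv_cancel₀ (ne_of_lt hyc), one_smul]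
  have h1 : (0 < α • y + t) ↔ (-α) • y < (-α) • ((-α⁻¹) • t) := by
    rw [hrw, neg_smul, neg_lt_iff_pos_add, add_comm]
  rw [h1, smul_lt_smul_iff_sm hsmul hβ]

lemma memq_iff {α : F} (hα : α ≠ 0) (t y : M) :
    α • y + t ∈ Q ↔ y - (-α⁻¹) • t ∈ Q := by
  rw [← Q.smul_mem_iff (inv_ne_zero hα) (x := α • y + t)]
  have : α⁻¹ • (α • y + t) = y - (-α⁻¹) • t := by
    rw [smul_add, smul_smul, inv_mul_cancel₀ hα, one_smul, neg_smul, sub_neg_eq_add]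
  rw [this]

lemma s_spec {L : Lit F M (γ ⊕ Fin 1)} {p : (γ → F) × M} (h : sOf L = some p)
    (x : γ → M) (y : M) :
    (L.holds (Q : Set M) (Sum.elim x (fun _ => y)) ↔ y - aeval p.1 p.2 x ∈ Q) := by
  obtain ⟨hk, hyc, rfl⟩ := sOf_some h
  rw [aeval_bnd]
  simp only [Lit.holds, hk, key_decomp]
  exact memq_iff hyc _ y

lemma r_spec {L : Lit F M (γ ⊕ Fin 1)} {p : (γ → F) × M} (h : rOf L = some p)
    (x : γ → M) (y : M) :
    (L.holds (Q : Set M) (Sum.elim x (fun _ => y)) ↔ y - aeval p.1 p.2 x ∉ Q) := by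
  obtain ⟨hk, hyc, rfl⟩ := rOf_some h
  rw [aeval_bnd]
  simp only [Lit.holds, hk, key_decomp]
  exact not_congr (memq_iff hyc _ y)

end Specs

end Proj

section Proj2
variable {γ δ : Type} [Fintype γ] [Fintype δ]
variable {Q : Submodule F M}

lemma mem_cell_elim (hsmul : ∀ (c : F) (x : M), 0 < c → 0 < x → 0 < c • x)
    (ls : List (Lit F M (γ ⊕ Fin 1))) (x : γ → M) (y : M) :
    (Sum.elim x (fun _ => y) ∈ cellSet (Q : Set M) ls) ↔
      ((∀ L' ∈ ls.filterMap restrOf, L'.holds (Q : Set M) x) ∧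
       (∀ p ∈ ls.filterMap lowOf, aeval p.1 p.2 x < y) ∧
       (∀ p ∈ ls.filterMap upOf, y < aeval p.1 p.2 x) ∧
       (∀ p ∈ ls.filterMap sOf, y - aeval p.1 p.2 x ∈ Q) ∧
       (∀ p ∈ ls.filterMap rOf, y - aeval p.1 p.2 x ∉ (Q : Set M)) ∧
       (∀ p ∈ ls.filterMap eqOf, y = aeval p.1 p.2 x)) := by
  constructor
  · intro h
    refine ⟨?_, ?_, ?_, ?_, ?_, ?_⟩ <;> intro p hp <;> rw [List.mem_filterMap] at hp <;>
      obtain ⟨L, hL, hfL⟩ := hp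
    · exact (restr_spec hfL x y).1 (h L hL)
    · exact (low_spec hsmul hfL x y).1 (h L hL)
    · exact (up_spec hsmul hfL x y).1 (h L hL)
    · exact (s_spec hfL x y).1 (h L hL)
    · exact (r_spec hfL x y).1 (h L hL)
    · exact (eq_spec hfL x y).1 (h L hL)
  · rintro ⟨h1, h2, h3, h4, h5, h6⟩ L hL
    rcases classify L with ⟨L', hf⟩ | ⟨p, hf⟩ | ⟨p, hf⟩ | ⟨p, hf⟩ | ⟨p, hf⟩ | ⟨p, hf⟩
    · exact (restr_spec hf x y).2 (h1 L' (List.mem_filterMap.2 ⟨L, hL, hf⟩))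
    · exact (low_spec hsmul hf x y).2 (h2 p (List.mem_filterMap.2 ⟨L, hL, hf⟩))
    · exact (up_spec hsmul hf x y).2 (h3 p (List.mem_filterMap.2 ⟨L, hL, hf⟩))
    · exact (s_spec hf x y).2 (h4 p (List.mem_filterMap.2 ⟨L, hL, hf⟩))
    · exact (r_spec hf x y).2 (h5 p (List.mem_filterMap.2 ⟨L, hL, hf⟩))
    · exact (eq_spec hf x y).2 (h6 p (List.mem_filterMap.2 ⟨L, hL, hf⟩))

def substLit (p : (γ → F) × M) (L : Lit F M (γ ⊕ Fin 1)) : Lit F M γ :=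
  ⟨L.k, fun i => L.c (Sum.inl i) + yc L * p.1 i, L.m + yc L • p.2⟩

lemma substLit_aeval (p : (γ → F) × M) (L : Lit F M (γ ⊕ Fin 1)) (x : γ → M) :
    aeval (substLit p L).c (substLit p L).m x
      = aeval L.c L.m (Sum.elim x (fun _ => aeval p.1 p.2 x)) := by
  rw [key_decomp]
  simp only [substLit, aeval, add_smul, Finset.sum_add_distrib, mul_smul, smul_add,
    Finset.smul_sum, cres]
  abel

lemma substLit_holds (p : (γ → F) × M) (L : Lit F M (γ ⊕ Fin 1)) (x : γ → M) :
    ((substLit p L).holds (Q : Set M) x ↔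
      L.holds (Q : Set M) (Sum.elim x (fun _ => aeval p.1 p.2 x))) := by
  have hk : (substLit p L).k = L.k := rfl
  cases hL : L.k <;>
    simp only [Lit.holds, hk, hL, substLit_aeval]

lemma proj_cell {one : M} (hsmul : ∀ (c : F) (x : M), 0 < c → 0 < x → 0 < c • x) (hone : 0 < one)
    (hQdense : ∀ a b : M, a < b → ∃ q ∈ Q, a < q ∧ q < b)
    (hQproper : (Q : Set M) ≠ Set.univ)
    (ls : List (Lit F M (γ ⊕ Fin 1))) :
    InD F (Q : Set M) {x : γ → M | ∃ y, Sum.elim x (fun _ => y) ∈ cellSet (Q : Set M) ls} := by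
  cases heq : ls.filterMap eqOf with
  | cons p ps =>
      have : {x : γ → M | ∃ y, Sum.elim x (fun _ => y) ∈ cellSet (Q : Set M) ls}
          = cellSet (Q : Set M) (ls.map (substLit p)) := by
        ext x
        constructor
        · rintro ⟨y, hy⟩
          have hyeq : y = aeval p.1 p.2 x := by
            have h6 := ((mem_cell_elim hsmul ls x y).1 hy).2.2.2.2.2
            exact h6 p (by rw [heq]; exact List.mem_cons_self)
          intro L hL
          rw [List.mem_map] at hL
          obtain ⟨L₀, hL₀, rfl⟩ := hL
          rw [substLit_holds]
          rw [hyeq] at hy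
          exact hy L₀ hL₀
        · intro h
          refine ⟨aeval p.1 p.2 x, fun L hL => ?_⟩
          rw [← substLit_holds]
          exact h (substLit p L) (List.mem_map.2 ⟨L, hL, rfl⟩)
      rw [this]
      exact InD_cell _
  | nil =>
      classical
      set lows := ls.filterMap lowOf with hlows
      set ups := ls.filterMap upOf with hups
      set ssl := ls.filterMap sOf with hssl
      set rsl := ls.filterMap rOf with hrsl
      set bigs : List (Lit F M γ) :=
        ls.filterMap restrOf
        ++ lows.flatMap (fun pl => ups.map (fun pu =>
             (⟨LKind.kpos, fun i => pu.1 i - pl.1 i, pu.2 - pl.2⟩ : Lit F M γ)))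
        ++ ssl.flatMap (fun ps => ssl.map (fun ps' =>
             (⟨LKind.kinq, fun i => ps.1 i - ps'.1 i, ps.2 - ps'.2⟩ : Lit F M γ)))
        ++ ssl.flatMap (fun ps => rsl.map (fun pr =>
             (⟨LKind.knq, fun i => ps.1 i - pr.1 i, ps.2 - pr.2⟩ : Lit F M γ))) with hbigs
      have : {x : γ → M | ∃ y, Sum.elim x (fun _ => y) ∈ cellSet (Q : Set M) ls}
          = cellSet (Q : Set M) bigs := by
        ext x
        simp only [Set.mem_setOf_eq, mem_cell_elim hsmul ls x, heq, List.not_mem_nil,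
          false_implies, implies_true, and_true]
        constructor
        · rintro ⟨y, h1, h2, h3, h4, h5⟩
          intro L hL
          rw [hbigs] at hL
          simp only [List.mem_append, List.mem_flatMap, List.mem_map] at hL
          rcases hL with ((hL | ⟨pl, hpl, pu, hpu, rfl⟩) | ⟨ps, hps, ps', hps', rfl⟩) |
            ⟨ps, hps, pr, hpr, rfl⟩
          · exact h1 L hL
          · show (0:M) < aeval _ _ x
            rw [aeval_sub]
            exact sub_pos.2 (lt_trans (h2 pl hpl) (h3 pu hpu))
          · show aeval _ _ x ∈ (Q : Set M)
            rw [aeval_sub]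
            have := Q.sub_mem (h4 ps' hps') (h4 ps hps)
            simpa using this
          · show aeval _ _ x ∉ (Q : Set M)
            rw [aeval_sub]
            intro hmem
            refine h5 pr hpr ?_
            have : (y - aeval ps.1 ps.2 x) + (aeval ps.1 ps.2 x - aeval pr.1 pr.2 x) ∈ Q :=
              Q.add_mem (h4 ps hps) hmem
            simpa using this
        · intro hb
          have h1 : ∀ L ∈ ls.filterMap restrOf, L.holds (Q : Set M) x := by
            intro L hL
            refine hb L ?_
            rw [hbigs]
            simp only [List.mem_append]
            exact Or.inl (Or.inl (Or.inl hL))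
          have hLU : ∀ l ∈ lows.map (fun p => aeval p.1 p.2 x),
              ∀ u ∈ ups.map (fun p => aeval p.1 p.2 x), l < u := by
            intro l hl u hu
            rw [List.mem_map] at hl hu
            obtain ⟨pl, hpl, rfl⟩ := hl
            obtain ⟨pu, hpu, rfl⟩ := hu
            have hmem : (⟨LKind.kpos, fun i => pu.1 i - pl.1 i, pu.2 - pl.2⟩ : Lit F M γ)
                ∈ bigs := by
              rw [hbigs]; simp only [List.mem_append, List.mem_flatMap, List.mem_map]
              exact Or.inl (Or.inl (Or.inr ⟨pl, hpl, pu, hpu, rfl⟩))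
            have h' : (0:M) < aeval (fun i => pu.1 i - pl.1 i) (pu.2 - pl.2) x := hb _ hmem
            rw [aeval_sub] at h'
            exact sub_pos.1 h'
          have hss : ∀ s ∈ ssl.map (fun p => aeval p.1 p.2 x),
              ∀ s' ∈ ssl.map (fun p => aeval p.1 p.2 x), s - s' ∈ Q := by
            intro s hs s' hs'
            rw [List.mem_map] at hs hs'
            obtain ⟨ps, hps, rfl⟩ := hs
            obtain ⟨ps', hps', rfl⟩ := hs'
            have hmem : (⟨LKind.kinq, fun i => ps.1 i - ps'.1 i, ps.2 - ps'.2⟩ : Lit F M γ)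
                ∈ bigs := by
              rw [hbigs]; simp only [List.mem_append, List.mem_flatMap, List.mem_map]
              exact Or.inl (Or.inr ⟨ps, hps, ps', hps', rfl⟩)
            have h' : aeval (fun i => ps.1 i - ps'.1 i) (ps.2 - ps'.2) x ∈ (Q : Set M) :=
              hb _ hmem
            rwa [aeval_sub] at h'
          have hsr : ∀ s ∈ ssl.map (fun p => aeval p.1 p.2 x),
              ∀ r ∈ rsl.map (fun p => aeval p.1 p.2 x), s - r ∉ Q := by
            intro s hs r hr
            rw [List.mem_map] at hs hr
            obtain ⟨ps, hps, rfl⟩ := hs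
            obtain ⟨pr, hpr, rfl⟩ := hr
            have hmem : (⟨LKind.knq, fun i => ps.1 i - pr.1 i, ps.2 - pr.2⟩ : Lit F M γ)
                ∈ bigs := by
              rw [hbigs]; simp only [List.mem_append, List.mem_flatMap, List.mem_map]
              exact Or.inr ⟨ps, hps, pr, hpr, rfl⟩
            have h' : aeval (fun i => ps.1 i - pr.1 i) (ps.2 - pr.2) x ∉ (Q : Set M) :=
              hb _ hmem
            rwa [aeval_sub] at h'
          obtain ⟨y, hy1, hy2, hy3, hy4⟩ :=
            exists_solution (one := one) hone hQdense hQproper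
              (lows.map (fun p => aeval p.1 p.2 x)) (ups.map (fun p => aeval p.1 p.2 x))
              (ssl.map (fun p => aeval p.1 p.2 x)) (rsl.map (fun p => aeval p.1 p.2 x))
              hLU hss hsr
          refine ⟨y, h1, ?_, ?_, ?_, ?_⟩
          · intro p hp; exact hy1 _ (List.mem_map.2 ⟨p, hp, rfl⟩)
          · intro p hp; exact hy2 _ (List.mem_map.2 ⟨p, hp, rfl⟩)
          · intro p hp; exact hy3 _ (List.mem_map.2 ⟨p, hp, rfl⟩)
          · intro p hp; exact hy4 _ (List.mem_map.2 ⟨p, hp, rfl⟩)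
      rw [this]
      exact InD_cell _

lemma InD_proj {one : M} (hsmul : ∀ (c : F) (x : M), 0 < c → 0 < x → 0 < c • x) (hone : 0 < one)
    (hQdense : ∀ a b : M, a < b → ∃ q ∈ Q, a < q ∧ q < b)
    (hQproper : (Q : Set M) ≠ Set.univ)
    {S : Set ((γ ⊕ Fin 1) → M)} (h : InD F (Q : Set M) S) :
    InD F (Q : Set M) {x : γ → M | ∃ y, Sum.elim x (fun _ => y) ∈ S} := by
  obtain ⟨lss, rfl⟩ := h
  induction lss with
  | nil => simpa using (InD_empty (F := F) (Q := (Q : Set M)) (γ := γ))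
  | cons ls lss ih =>
      have hsplit : {x : γ → M | ∃ y, Sum.elim x (fun _ => y) ∈
            {z : (γ ⊕ Fin 1) → M | ∃ l ∈ ls :: lss, z ∈ cellSet (Q : Set M) l}}
          = {x : γ → M | ∃ y, Sum.elim x (fun _ => y) ∈ cellSet (Q : Set M) ls}
            ∪ {x : γ → M | ∃ y, Sum.elim x (fun _ => y) ∈
                {z : (γ ⊕ Fin 1) → M | ∃ l ∈ lss, z ∈ cellSet (Q : Set M) l}} := by
        ext x
        simp only [Set.mem_setOf_eq, Set.mem_union, List.mem_cons]
        constructor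
        · rintro ⟨y, l, (rfl | hl), hy⟩
          · exact Or.inl ⟨y, hy⟩
          · exact Or.inr ⟨y, l, hl, hy⟩
        · rintro (⟨y, hy⟩ | ⟨y, l, hl, hy⟩)
          · exact ⟨y, ls, Or.inl rfl, hy⟩
          · exact ⟨y, l, Or.inr hl, hy⟩
      rw [hsplit]
      exact (proj_cell (one := one) hsmul hone hQdense hQproper ls).union ih

lemma InD_comp {Qs : Set M} (e : γ ≃ δ) {S : Set (γ → M)} (h : InD F Qs S) :
    InD F Qs {x : δ → M | x ∘ e ∈ S} := by
  obtain ⟨lss, rfl⟩ := h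
  refine ⟨lss.map (fun ls => ls.map (fun L => ⟨L.k, L.c ∘ e.symm, L.m⟩)), ?_⟩
  have haev : ∀ (c : γ → F) (m : M) (x : δ → M),
      aeval (c ∘ e.symm) m x = aeval c m (x ∘ e) := by
    intro c m x
    unfold aeval
    congr 1
    exact (Fintype.sum_equiv e _ _ (fun j => by simp)).symm
  have hlit : ∀ (L : Lit F M γ) (x : δ → M),
      (Lit.holds Qs ⟨L.k, L.c ∘ e.symm, L.m⟩ x ↔ L.holds Qs (x ∘ e)) := by
    intro L x
    cases hk : L.k <;> simp only [Lit.holds, hk, haev]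
  ext x
  simp only [Set.mem_setOf_eq, List.mem_map]
  constructor
  · rintro ⟨ls, hls, hcell⟩
    refine ⟨_, ⟨ls, hls, rfl⟩, ?_⟩
    intro L hL
    rw [List.mem_map] at hL
    obtain ⟨L₀, hL₀, rfl⟩ := hL
    exact (hlit L₀ x).2 (hcell L₀ hL₀)
  · rintro ⟨_, ⟨ls, hls, rfl⟩, hcell⟩
    refine ⟨ls, hls, fun L hL => ?_⟩
    exact (hlit L x).1 (hcell _ (List.mem_map.2 ⟨L, hL, rfl⟩))

end Proj2

section Bridge1
open FirstOrder Language

lemma aeval_add (c c' : γ → F) (m m' : M) [Fintype γ] (x : γ → M) :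
    aeval (fun i => c i + c' i) (m + m') x = aeval c m x + aeval c' m' x := by
  simp only [aeval, add_smul, Finset.sum_add_distrib]
  abel

lemma term_affine (one : M) (Qs : Set M) :
    let _ := LPStruc F M one Qs
    ∀ {γ : Type} [Fintype γ] [DecidableEq γ]
      (t : ((LP F)[[(Set.univ : Set M)]]).Term γ),
      ∃ (c : γ → F) (m : M), ∀ x : γ → M, t.realize x = aeval c m x := by
  intro _ γ _ _ t
  induction t with
  | var i =>
      refine ⟨fun j => if j = i then 1 else 0, 0, fun x => ?_⟩
      simp only [Term.realize, aeval, ite_smul, one_smul, zero_smul, add_zero]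
      rw [Finset.sum_ite_eq' Finset.univ i x]
      simp
  | func f ts ih =>
      rename_i l
      choose c m hcm using ih
      rcases f with g | cst
      · cases g with
        | add =>
            refine ⟨fun i => c 0 i + c 1 i, m 0 + m 1, fun x => ?_⟩
            have : Term.realize x (Term.func (Sum.inl (LPFunc.add)) ts)
                = Term.realize x (ts 0) + Term.realize x (ts 1) := rfl
            erw [this, hcm 0, hcm 1, aeval_add]
        | neg =>
            refine ⟨fun i => -(c 0 i), -(m 0), fun x => ?_⟩
            have : Term.realize x (Term.func (Sum.inl (LPFunc.neg)) ts)
                = -(Term.realize x (ts 0)) := rfl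
            erw [this, hcm 0, aeval_neg]
        | zero =>
            refine ⟨fun _ => 0, 0, fun x => ?_⟩
            have : Term.realize x (Term.func (Sum.inl (LPFunc.zero)) ts) = (0:M) := rfl
            erw [this]
            simp [aeval]
        | one =>
            refine ⟨fun _ => 0, one, fun x => ?_⟩
            have : Term.realize x (Term.func (Sum.inl (LPFunc.one)) ts) = one := rfl
            erw [this]
            simp [aeval]
        | smul a =>
            refine ⟨fun i => a * c 0 i, a • m 0, fun x => ?_⟩
            have : Term.realize x (Term.func (Sum.inl (LPFunc.smul a)) ts)
                = a • Term.realize x (ts 0) := rfl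
            erw [this, hcm 0, aeval_smul]
      · cases l with
        | zero =>
            refine ⟨fun _ => 0, (cst : (Set.univ : Set M)).val, fun x => ?_⟩
            have : Term.realize x (Term.func (Sum.inr cst) ts)
                = (cst : (Set.univ : Set M)).val := rfl
            erw [this]
            simp [aeval]
        | succ n => exact isEmptyElim cst

end Bridge1

section Bridge1b
open FirstOrder Language
variable {Q : Submodule F M}

lemma formula_InD (one : M) (hone : 0 < one)
    (hsmul : ∀ (c : F) (x : M), 0 < c → 0 < x → 0 < c • x)
    (Q : Submodule F M) (hQproper : (Q : Set M) ≠ Set.univ)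
    (hQdense : ∀ a b : M, a < b → ∃ q ∈ Q, a < q ∧ q < b) :
    let _ := LPStruc F M one (Q : Set M)
    ∀ {α : Type} [Fintype α] [DecidableEq α] {l : ℕ}
      (φ : ((LP F)[[(Set.univ : Set M)]]).BoundedFormula α l),
      InD F (Q : Set M) {p : (α ⊕ Fin l) → M | φ.Realize (p ∘ Sum.inl) (p ∘ Sum.inr)} := by
  intro _inst α _ _ l φ
  induction φ with
  | falsum =>
      refine ⟨[], ?_⟩
      ext p
      simp [BoundedFormula.Realize]
  | equal t₁ t₂ =>
      obtain ⟨c₁, m₁, h₁⟩ := term_affine (F := F) one (Q : Set M) t₁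
      obtain ⟨c₂, m₂, h₂⟩ := term_affine (F := F) one (Q : Set M) t₂
      have : {p : (α ⊕ _) → M | BoundedFormula.Realize (BoundedFormula.equal t₁ t₂)
            (p ∘ Sum.inl) (p ∘ Sum.inr)}
          = cellSet (Q : Set M) [⟨LKind.keq, fun i => c₁ i - c₂ i, m₁ - m₂⟩] := by
        ext p
        have helim : Sum.elim (p ∘ Sum.inl) (p ∘ Sum.inr) = p := Sum.elim_comp_inl_inr p
        simp only [Set.mem_setOf_eq, BoundedFormula.Realize, helim, cellSet,
          List.mem_singleton, forall_eq, Lit.holds, h₁, h₂, aeval_sub]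
        rw [sub_eq_zero]
      rw [this]; exact InD_cell _
  | rel R ts =>
      rcases R with r | r
      · cases r with
        | lt =>
            obtain ⟨c₁, m₁, h₁⟩ := term_affine (F := F) one (Q : Set M) (ts 0)
            obtain ⟨c₂, m₂, h₂⟩ := term_affine (F := F) one (Q : Set M) (ts 1)
            have : {p : (α ⊕ _) → M | BoundedFormula.Realize (BoundedFormula.rel
                  (Sum.inl LPRel.lt) ts) (p ∘ Sum.inl) (p ∘ Sum.inr)}
                = cellSet (Q : Set M) [⟨LKind.kpos, fun i => c₂ i - c₁ i, m₂ - m₁⟩] := by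
              ext p
              have helim : Sum.elim (p ∘ Sum.inl) (p ∘ Sum.inr) = p := Sum.elim_comp_inl_inr p
              have hreal : BoundedFormula.Realize (BoundedFormula.rel (L := (LP F)[[(Set.univ : Set M)]])
                    (Sum.inl LPRel.lt) ts) (p ∘ Sum.inl) (p ∘ Sum.inr)
                  ↔ Term.realize p (ts 0) < Term.realize p (ts 1) := by
                erw [show (BoundedFormula.Realize (BoundedFormula.rel
                    (Sum.inl LPRel.lt) ts) (p ∘ Sum.inl) (p ∘ Sum.inr)) =
                    (Structure.RelMap (L := (LP F)[[(Set.univ : Set M)]]) (M := M) (Sum.inl LPRel.lt)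
                      fun i => Term.realize (Sum.elim (p ∘ Sum.inl) (p ∘ Sum.inr)) (ts i)) from rfl]
                rw [helim]
                exact Iff.rfl
              simp only [Set.mem_setOf_eq, hreal, cellSet, List.mem_singleton, forall_eq,
                Lit.holds, h₁, h₂, aeval_sub]
              rw [sub_pos]
              exact hreal.trans (by rw [h₁, h₂])
            erw [this]; exact InD_cell _
        | q =>
            obtain ⟨c₁, m₁, h₁⟩ := term_affine (F := F) one (Q : Set M) (ts 0)
            have : {p : (α ⊕ _) → M | BoundedFormula.Realize (BoundedFormula.rel
                  (Sum.inl LPRel.q) ts) (p ∘ Sum.inl) (p ∘ Sum.inr)}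
                = cellSet (Q : Set M) [⟨LKind.kinq, c₁, m₁⟩] := by
              ext p
              have helim : Sum.elim (p ∘ Sum.inl) (p ∘ Sum.inr) = p := Sum.elim_comp_inl_inr p
              have hreal : BoundedFormula.Realize (BoundedFormula.rel (L := (LP F)[[(Set.univ : Set M)]])
                    (Sum.inl LPRel.q) ts) (p ∘ Sum.inl) (p ∘ Sum.inr)
                  ↔ Term.realize p (ts 0) ∈ (Q : Set M) := by
                erw [show (BoundedFormula.Realize (BoundedFormula.rel
                    (Sum.inl LPRel.q) ts) (p ∘ Sum.inl) (p ∘ Sum.inr)) =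
                    (Structure.RelMap (L := (LP F)[[(Set.univ : Set M)]]) (M := M) (Sum.inl LPRel.q)
                      fun i => Term.realize (Sum.elim (p ∘ Sum.inl) (p ∘ Sum.inr)) (ts i)) from rfl]
                rw [helim]
                exact Iff.rfl
              simp only [Set.mem_setOf_eq, hreal, cellSet, List.mem_singleton, forall_eq,
                Lit.holds, h₁]
              exact hreal.trans (by rw [h₁])
            erw [this]; exact InD_cell _
      · exact isEmptyElim r
  | imp φ ψ ihφ ihψ =>
      have : {p : (α ⊕ _) → M | BoundedFormula.Realize (φ.imp ψ) (p ∘ Sum.inl) (p ∘ Sum.inr)}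
          = {p | BoundedFormula.Realize φ (p ∘ Sum.inl) (p ∘ Sum.inr)}ᶜ
            ∪ {p | BoundedFormula.Realize ψ (p ∘ Sum.inl) (p ∘ Sum.inr)} := by
        ext p
        simp only [Set.mem_setOf_eq, Set.mem_union, Set.mem_compl_iff, BoundedFormula.Realize]
        tauto
      rw [this]
      exact ihφ.compl.union ihψ
  | all φ' ih =>
      rename_i n
      set eqv : ((α ⊕ Fin n) ⊕ Fin 1) ≃ (α ⊕ Fin (n + 1)) :=
        (Equiv.sumAssoc α (Fin n) (Fin 1)).trans ((Equiv.refl α).sumCongr finSumFinEquiv)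
        with heqv
      set T : Set (((α ⊕ Fin n) ⊕ Fin 1) → M) :=
        {x | x ∘ eqv.symm ∈ {p : (α ⊕ Fin (n+1)) → M |
          BoundedFormula.Realize φ' (p ∘ Sum.inl) (p ∘ Sum.inr)}} with hT
      have hTD : InD F (Q : Set M) T := InD_comp eqv.symm ih
      have hmem : ∀ (p : (α ⊕ Fin n) → M) (y : M),
          (Sum.elim p (fun _ => y) ∈ T) ↔
            BoundedFormula.Realize φ' (p ∘ Sum.inl) (Fin.snoc (p ∘ Sum.inr) y) := by
        intro p y
        rw [hT]
        simp only [Set.mem_setOf_eq]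
        have h1 : (Sum.elim p (fun _ => y)) ∘ eqv.symm ∘ Sum.inl = p ∘ Sum.inl := by
          funext a
          simp [heqv, Equiv.sumAssoc]
        have h2 : (Sum.elim p (fun _ => y)) ∘ eqv.symm ∘ Sum.inr
            = Fin.snoc (p ∘ Sum.inr) y := by
          funext i
          refine Fin.lastCases ?_ ?_ i
          · simp [heqv, Fin.snoc_last, Equiv.sumAssoc]
          · intro j
            simp only [Function.comp_apply, Fin.snoc_castSucc, heqv]
            have : finSumFinEquiv.symm (Fin.castSucc j) = Sum.inl j := by
              rw [show (Fin.castSucc j) = Fin.castAdd 1 j from rfl]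
              exact finSumFinEquiv_symm_apply_castAdd j
            simp [this, Equiv.sumAssoc]
        rw [show ((Sum.elim p (fun _ => y)) ∘ eqv.symm) ∘ Sum.inl
            = (Sum.elim p (fun _ => y)) ∘ eqv.symm ∘ Sum.inl from rfl] at *
        constructor
        · intro h
          rw [← h1, ← h2]
          convert h using 2 <;> rw [Function.comp_assoc]
        · intro h
          have := h
          rw [← h1, ← h2] at this
          convert this using 2 <;> rw [Function.comp_assoc]
      have hset : {p : (α ⊕ Fin n) → M |
            BoundedFormula.Realize φ'.all (p ∘ Sum.inl) (p ∘ Sum.inr)}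
          = ({p : (α ⊕ Fin n) → M | ∃ y, Sum.elim p (fun _ => y) ∈ Tᶜ})ᶜ := by
        ext p
        simp only [Set.mem_setOf_eq, Set.mem_compl_iff, not_exists, not_not,
          BoundedFormula.Realize]
        constructor
        · intro h y
          have := h y
          rw [← hmem p y] at this
          simpa using this
        · intro h y
          have := h y
          exact (hmem p y).1 this
      rw [hset]
      exact (InD_proj (one := one) hsmul hone hQdense hQproper hTD.compl).compl

end Bridge1b

section Bridge2
open FirstOrder Language

def litTerm (one : M) (Qs : Set M) (c : Fin 1 → F) (m : M) :
    ((LP F)[[(Set.univ : Set M)]]).Term (Fin 1 ⊕ Fin 0) :=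
  Term.func (Sum.inl LPFunc.add)
    ![Term.func (Sum.inl (LPFunc.smul (c 0))) ![Term.var (Sum.inl 0)],
      Term.func (l := 0) (Sum.inr (⟨m, Set.mem_univ m⟩ : (Set.univ : Set M))) ![] ]

lemma litTerm_realize (one : M) (Qs : Set M) (c : Fin 1 → F) (m : M) :
    let _ := LPStruc F M one Qs
    ∀ (x : Fin 1 → M) (d : Fin 0 → M),
      Term.realize (Sum.elim x d) (litTerm (F := F) one Qs c m) = aeval c m x := by
  intro _ x d
  have : aeval c m x = c 0 • x 0 + m := by
    simp [aeval, Fin.sum_univ_one]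
  rw [this]
  rfl

lemma lit_definable (one : M) (Qs : Set M) :
    let _ := LPStruc F M one Qs
    ∀ (L : Lit F M (Fin 1)),
      Set.Definable (Set.univ : Set M) (LP F) {x : Fin 1 → M | L.holds Qs x} := by
  intro _inst L
  obtain ⟨k, c, m⟩ := L
  have hzero : ∀ (x : Fin 1 → M) (d : Fin 0 → M),
      Term.realize (L := (LP F)[[(Set.univ : Set M)]]) (M := M) (Sum.elim x d)
        (Term.func (Sum.inl LPFunc.zero) ![]) = 0 := by
    intro x d; rfl
  cases k
  · -- keq
    refine ⟨BoundedFormula.equal (litTerm (F := F) one Qs c m)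
      (Term.func (Sum.inl LPFunc.zero) ![]), ?_⟩
    ext x
    simp only [Set.mem_setOf_eq, Lit.holds, Formula.Realize, BoundedFormula.Realize]
    rw [show (Sum.elim x (default : Fin 0 → M)) = Sum.elim x default from rfl]
    rw [litTerm_realize (F := F) one Qs c m x default, hzero x default]
  · -- kpos
    refine ⟨BoundedFormula.rel (Sum.inl LPRel.lt)
      ![Term.func (Sum.inl LPFunc.zero) ![], litTerm (F := F) one Qs c m], ?_⟩
    ext x
    simp only [Set.mem_setOf_eq, Lit.holds, Formula.Realize]
    have : BoundedFormula.Realize (L := (LP F)[[(Set.univ : Set M)]]) (M := M)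
        (BoundedFormula.rel (Sum.inl LPRel.lt)
          ![Term.func (Sum.inl LPFunc.zero) ![], litTerm (F := F) one Qs c m]) x default
        ↔ (0 : M) < Term.realize (Sum.elim x default) (litTerm (F := F) one Qs c m) := by
      exact Iff.rfl
    rw [this, litTerm_realize (F := F) one Qs c m x default]
  · -- kinq
    refine ⟨BoundedFormula.rel (Sum.inl LPRel.q) ![litTerm (F := F) one Qs c m], ?_⟩
    ext x
    simp only [Set.mem_setOf_eq, Lit.holds, Formula.Realize]
    have : BoundedFormula.Realize (L := (LP F)[[(Set.univ : Set M)]]) (M := M)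
        (BoundedFormula.rel (Sum.inl LPRel.q) ![litTerm (F := F) one Qs c m]) x default
        ↔ Term.realize (Sum.elim x default) (litTerm (F := F) one Qs c m) ∈ Qs := by
      exact Iff.rfl
    rw [this, litTerm_realize (F := F) one Qs c m x default]
  · -- knq
    have hc : {x : Fin 1 → M | (Lit.mk LKind.knq c m).holds Qs x}
        = {x : Fin 1 → M | (Lit.mk LKind.kinq c m).holds Qs x}ᶜ := by
      ext x; simp [Lit.holds]
    rw [hc]
    refine Set.Definable.compl ?_
    refine ⟨BoundedFormula.rel (Sum.inl LPRel.q) ![litTerm (F := F) one Qs c m], ?_⟩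
    ext x
    simp only [Set.mem_setOf_eq, Lit.holds, Formula.Realize]
    have : BoundedFormula.Realize (L := (LP F)[[(Set.univ : Set M)]]) (M := M)
        (BoundedFormula.rel (Sum.inl LPRel.q) ![litTerm (F := F) one Qs c m]) x default
        ↔ Term.realize (Sum.elim x default) (litTerm (F := F) one Qs c m) ∈ Qs := by
      exact Iff.rfl
    rw [this, litTerm_realize (F := F) one Qs c m x default]

lemma InD_definable (one : M) (Qs : Set M) :
    let _ := LPStruc F M one Qs
    ∀ {S : Set (Fin 1 → M)}, InD F Qs S → Set.Definable (Set.univ : Set M) (LP F) S := by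
  intro _inst S hS
  obtain ⟨lss, rfl⟩ := hS
  induction lss with
  | nil =>
      have : {x : Fin 1 → M | ∃ ls ∈ ([] : List (List (Lit F M (Fin 1)))), x ∈ cellSet Qs ls}
          = ∅ := by ext x; simp
      rw [this]; exact Set.definable_empty
  | cons ls lss ih =>
      have hsplit : {x : Fin 1 → M | ∃ l ∈ ls :: lss, x ∈ cellSet Qs l}
          = cellSet Qs ls ∪ {x : Fin 1 → M | ∃ l ∈ lss, x ∈ cellSet Qs l} := by
        ext x; simp [List.mem_cons, or_and_right, exists_or]
      rw [hsplit]
      refine Set.Definable.union ?_ ih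
      -- cell definable
      clear hsplit ih lss
      induction ls with
      | nil => rw [cellSet_nil]; exact Set.definable_univ
      | cons L ls ihc =>
          have : cellSet Qs (L :: ls) = {x : Fin 1 → M | L.holds Qs x} ∩ cellSet Qs ls := by
            ext x; simp [cellSet, List.forall_mem_cons]
          rw [this]
          exact Set.Definable.inter (lit_definable (F := F) one Qs L) ihc

end Bridge2

section OneVar
variable {Q : Submodule F M}

def cellM (Qs : Set M) (ls : List (Lit F M (Fin 1))) : Set M :=
  {m : M | (fun _ => m) ∈ cellSet Qs ls}

def liftLit (L : Lit F M (Fin 1)) : Lit F M (Fin 0 ⊕ Fin 1) :=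
  ⟨L.k, Sum.elim Fin.elim0 L.c, L.m⟩

lemma aeval_lift (c : Fin 1 → F) (m : M) (x : Fin 0 → M) (y : M) :
    aeval (Sum.elim Fin.elim0 c) m (Sum.elim x (fun _ => y)) = aeval c m (fun _ => y) := by
  simp [aeval, Fintype.sum_sum_type, Fin.sum_univ_one]

lemma aeval_fin0 (c : Fin 0 → F) (m : M) (x : Fin 0 → M) : aeval c m x = m := by
  simp [aeval]

lemma liftLit_holds (Qs : Set M) (L : Lit F M (Fin 1)) (x : Fin 0 → M) (y : M) :
    ((liftLit L).holds Qs (Sum.elim x (fun _ => y)) ↔ L.holds Qs (fun _ => y)) := by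
  have hk : (liftLit L).k = L.k := rfl
  cases hL : L.k <;> simp only [Lit.holds, hk, hL, liftLit, aeval_lift]

lemma mem_cellM_iff (Qs : Set M) (ls : List (Lit F M (Fin 1))) (y : M) :
    y ∈ cellM Qs ls ↔
      Sum.elim (fun _ : Fin 0 => (0:M)) (fun _ => y) ∈ cellSet Qs (ls.map liftLit) := by
  simp only [cellM, Set.mem_setOf_eq, cellSet]
  constructor
  · intro h L hL
    rw [List.mem_map] at hL
    obtain ⟨L₀, hL₀, rfl⟩ := hL
    exact (liftLit_holds Qs L₀ _ y).2 (h L₀ hL₀)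
  · intro h L hL
    exact (liftLit_holds Qs L _ y).1 (h _ (List.mem_map.2 ⟨L, hL, rfl⟩))

lemma toExt_lt_toExt (x y : M) : toExt M x < toExt M y ↔ x < y := by
  simp [toExt]

lemma bot_lt_toExt (y : M) : (⊥ : WithBot (WithTop M)) < toExt M y :=
  WithBot.bot_lt_coe _

lemma toExt_lt_top (y : M) : toExt M y < (⊤ : WithBot (WithTop M)) := by
  have h1 : ((⊤ : WithTop M) : WithBot (WithTop M)) = ⊤ := rfl
  rw [toExt, ← h1, WithBot.coe_lt_coe]
  exact WithTop.coe_lt_top _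

lemma lower_iff (Ls : List M) (y : M) :
    (∀ l ∈ Ls, l < y) ↔ (Ls.map (toExt M)).foldr max ⊥ < toExt M y := by
  induction Ls with
  | nil =>
      simp only [List.not_mem_nil, false_implies, implies_true, true_iff, List.map_nil,
        List.foldr_nil]
      exact bot_lt_toExt y
  | cons l Ls ih =>
      simp only [List.forall_mem_cons, List.map_cons, List.foldr_cons, max_lt_iff, ih,
        toExt_lt_toExt]

lemma upper_iff (Us : List M) (y : M) :
    (∀ u ∈ Us, y < u) ↔ toExt M y < (Us.map (toExt M)).foldr min ⊤ := by
  induction Us with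
  | nil =>
      simp only [List.not_mem_nil, false_implies, implies_true, true_iff, List.map_nil,
        List.foldr_nil]
      exact toExt_lt_top y
  | cons u Us ih =>
      simp only [List.forall_mem_cons, List.map_cons, List.foldr_cons, lt_min_iff, ih,
        toExt_lt_toExt]

lemma mem_cosetUnion (C : Finset M) (y : M) :
    y ∈ cosetUnion M (Q : Set M) C ↔ ∃ c ∈ C, y - c ∈ Q := by
  simp [cosetUnion]

lemma cell1_struct (hsmul : ∀ (c : F) (x : M), 0 < c → 0 < x → 0 < c • x)
    (ls : List (Lit F M (Fin 1))) :
    ∃ (X : Finset M) (NL : List (Set M)),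
      (∀ N ∈ NL, NearInterval M (Q : Set M) N) ∧
      cellM (Q : Set M) ls = ↑X ∪ NL.foldr (· ∪ ·) ∅ ∧
      ↑X ⊆ cellM (Q : Set M) ls ∧
      (NL.foldr (· ∪ ·) ∅ = ∅ ∨ NL.foldr (· ∪ ·) ∅ = cellM (Q : Set M) ls) := by
  classical
  by_cases hne : (cellM (Q : Set M) ls).Nonempty
  · set lsl := ls.map liftLit with hlsl
    have hmem : ∀ y : M, y ∈ cellM (Q : Set M) ls ↔
        ((∀ L' ∈ lsl.filterMap restrOf, L'.holds (Q : Set M) (fun _ : Fin 0 => (0:M))) ∧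
         (∀ p ∈ lsl.filterMap lowOf, p.2 < y) ∧
         (∀ p ∈ lsl.filterMap upOf, y < p.2) ∧
         (∀ p ∈ lsl.filterMap sOf, y - p.2 ∈ Q) ∧
         (∀ p ∈ lsl.filterMap rOf, y - p.2 ∉ (Q : Set M)) ∧
         (∀ p ∈ lsl.filterMap eqOf, y = p.2)) := by
      intro y
      rw [mem_cellM_iff, mem_cell_elim hsmul]
      have haev : ∀ p : (Fin 0 → F) × M, aeval p.1 p.2 (fun _ : Fin 0 => (0:M)) = p.2 :=
        fun p => aeval_fin0 _ _ _
      simp only [haev]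
      exact Iff.rfl
    cases heq : lsl.filterMap eqOf with
    | cons p ps =>
        -- pinned: cellM = {p.2}
        obtain ⟨y₀, hy₀⟩ := hne
        have hy₀p : y₀ = p.2 := ((hmem y₀).1 hy₀).2.2.2.2.2 p (by rw [heq]; exact List.mem_cons_self)
        have hsub : cellM (Q : Set M) ls = {p.2} := by
          apply Set.eq_singleton_iff_unique_mem.2
          refine ⟨hy₀p ▸ hy₀, ?_⟩
          intro y hy
          exact ((hmem y).1 hy).2.2.2.2.2 p (by rw [heq]; exact List.mem_cons_self)
        refine ⟨{p.2}, [], by simp, ?_, ?_, Or.inl rfl⟩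
        · rw [hsub]; simp
        · rw [hsub]; simp
    | nil =>
        -- near-interval
        set Ls : List M := (lsl.filterMap lowOf).map (fun p => p.2) with hLs
        set Us : List M := (lsl.filterMap upOf).map (fun p => p.2) with hUs
        set ssl : List M := (lsl.filterMap sOf).map (fun p => p.2) with hssl
        set rsl : List M := (lsl.filterMap rOf).map (fun p => p.2) with hrsl
        have hmem' : ∀ y : M, y ∈ cellM (Q : Set M) ls ↔
            ((∀ L' ∈ lsl.filterMap restrOf, L'.holds (Q : Set M) (fun _ : Fin 0 => (0:M))) ∧
             (∀ l ∈ Ls, l < y) ∧ (∀ u ∈ Us, y < u) ∧ (∀ s ∈ ssl, y - s ∈ Q) ∧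
             (∀ r ∈ rsl, y - r ∉ (Q : Set M))) := by
          intro y
          rw [hmem y, heq]
          simp only [hLs, hUs, hssl, hrsl, List.forall_mem_map, List.not_mem_nil,
            false_implies, implies_true, and_true]
        obtain ⟨y₀, hy₀⟩ := hne
        have hR : ∀ L' ∈ lsl.filterMap restrOf, L'.holds (Q : Set M) (fun _ : Fin 0 => (0:M)) :=
          ((hmem' y₀).1 hy₀).1
        set a : WithBot (WithTop M) := (Ls.map (toExt M)).foldr max ⊥ with ha
        set b : WithBot (WithTop M) := (Us.map (toExt M)).foldr min ⊤ with hb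
        have hy₀i : a < toExt M y₀ ∧ toExt M y₀ < b := by
          obtain ⟨_, h1, h2, _, _⟩ := (hmem' y₀).1 hy₀
          exact ⟨(lower_iff Ls y₀).1 h1, (upper_iff Us y₀).1 h2⟩
        have hab : a < b := lt_trans hy₀i.1 hy₀i.2
        cases hss : ssl with
        | nil =>
            have hform : cellM (Q : Set M) ls
                = extIoo M a b \ cosetUnion M (Q : Set M) rsl.toFinset := by
              ext y
              rw [hmem' y, hss]
              simp only [List.not_mem_nil, false_implies, implies_true, true_and,
                Set.mem_diff, extIoo, Set.mem_setOf_eq, mem_cosetUnion (Q := Q)]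
              constructor
              · rintro ⟨h0, h1, h2, h4⟩
                refine ⟨⟨(lower_iff Ls y).1 h1, (upper_iff Us y).1 h2⟩, ?_⟩
                rintro ⟨r, hr, hyr⟩
                exact h4 r (List.mem_toFinset.1 hr) hyr
              · rintro ⟨⟨h1, h2⟩, h4⟩
                exact ⟨hR, (lower_iff Ls y).2 h1, (upper_iff Us y).2 h2,
                  fun r hr hyr => h4 ⟨r, List.mem_toFinset.2 hr, hyr⟩⟩
            refine ⟨∅, [cellM (Q : Set M) ls], ?_, by simp, by simp, Or.inr (by simp)⟩
            intro N hN
            rw [List.mem_singleton] at hN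
            subst hN
            refine ⟨⟨y₀, hy₀⟩, a, b, rsl.toFinset, hab, Or.inr hform⟩
        | cons s ss' =>
            have hy₀s : y₀ - s ∈ Q := by
              obtain ⟨_, _, _, h3, _⟩ := (hmem' y₀).1 hy₀
              exact h3 s (by rw [hss]; exact List.mem_cons_self)
            have hsAll : ∀ s' ∈ ssl, s - s' ∈ Q := by
              intro s' hs'
              obtain ⟨_, _, _, h3, _⟩ := (hmem' y₀).1 hy₀
              have h1 := h3 s' hs'
              have h2 := Q.sub_mem h1 hy₀s
              have h3' : (y₀ - s') - (y₀ - s) = s - s' := by abel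
              rwa [h3'] at h2
            have hrAll : ∀ r ∈ rsl, s - r ∉ Q := by
              intro r hr hsr
              obtain ⟨_, _, _, _, h4⟩ := (hmem' y₀).1 hy₀
              refine h4 r hr ?_
              have : (y₀ - s) + (s - r) ∈ Q := Q.add_mem hy₀s hsr
              simpa using this
            have hform : cellM (Q : Set M) ls
                = extIoo M a b ∩ cosetUnion M (Q : Set M) {s} := by
              ext y
              rw [hmem' y]
              simp only [Set.mem_inter_iff, extIoo, Set.mem_setOf_eq, mem_cosetUnion,
                Finset.mem_singleton, exists_eq_left]
              constructor
              · rintro ⟨h0, h1, h2, h3, h4⟩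
                exact ⟨⟨(lower_iff Ls y).1 h1, (upper_iff Us y).1 h2⟩,
                  h3 s (by rw [hss]; exact List.mem_cons_self)⟩
              · rintro ⟨⟨h1, h2⟩, hys⟩
                refine ⟨hR, (lower_iff Ls y).2 h1, (upper_iff Us y).2 h2, ?_, ?_⟩
                · intro s' hs'
                  have : (y - s) + (s - s') ∈ Q := Q.add_mem hys (hsAll s' hs')
                  simpa using this
                · intro r hr hyr
                  refine hrAll r hr ?_
                  have : (s - y) + (y - r) ∈ Q := Q.add_mem (by simpa using Q.neg_mem hys) hyr
                  simpa using this
            refine ⟨∅, [cellM (Q : Set M) ls], ?_, by simp, by simp, Or.inr (by simp)⟩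
            intro N hN
            rw [List.mem_singleton] at hN
            subst hN
            refine ⟨⟨y₀, hy₀⟩, a, b, {s}, hab, Or.inl hform⟩
  · rw [Set.not_nonempty_iff_eq_empty] at hne
    exact ⟨∅, [], by simp, by simp [hne], by simp [hne], Or.inl rfl⟩

end OneVar

section Endgame
variable {Q : Submodule F M}

def DsetM (Qs : Set M) (T : Set M) : Prop := InD F Qs {x : Fin 1 → M | x 0 ∈ T}

lemma const_eq_self (x : Fin 1 → M) : (fun _ : Fin 1 => x 0) = x :=
  funext fun i => by rw [Fin.eq_zero i]

lemma DsetM_empty {Qs : Set M} : DsetM (F := F) Qs (∅ : Set M) := by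
  have : {x : Fin 1 → M | x 0 ∈ (∅ : Set M)} = ∅ := by ext x; simp
  rw [DsetM, this]; exact InD_empty

lemma DsetM.union {Qs : Set M} {A B : Set M} (hA : DsetM (F := F) Qs A)
    (hB : DsetM (F := F) Qs B) : DsetM (F := F) Qs (A ∪ B) := by
  have : {x : Fin 1 → M | x 0 ∈ A ∪ B}
      = {x : Fin 1 → M | x 0 ∈ A} ∪ {x : Fin 1 → M | x 0 ∈ B} := by ext x; simp
  rw [DsetM, this]; exact InD.union hA hB

lemma DsetM.sdiff {Qs : Set M} {A B : Set M} (hA : DsetM (F := F) Qs A)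
    (hB : DsetM (F := F) Qs B) : DsetM (F := F) Qs (A \ B) := by
  have : {x : Fin 1 → M | x 0 ∈ A \ B}
      = {x : Fin 1 → M | x 0 ∈ A} \ {x : Fin 1 → M | x 0 ∈ B} := by ext x; simp
  rw [DsetM, this]; exact InD.sdiff hA hB

lemma DsetM_cellM (ls : List (Lit F M (Fin 1))) :
    DsetM (F := F) (Q : Set M) (cellM (Q : Set M) ls) := by
  have : {x : Fin 1 → M | x 0 ∈ cellM (Q : Set M) ls} = cellSet (Q : Set M) ls := by
    ext x
    simp only [Set.mem_setOf_eq, cellM]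
    rw [const_eq_self]
  rw [DsetM, this]
  exact InD_cell _

lemma mem_bigU {NL : List (Set M)} {y : M} :
    y ∈ NL.foldr (· ∪ ·) ∅ ↔ ∃ T ∈ NL, y ∈ T := by
  induction NL with
  | nil => simp
  | cons T NL ih => simp [ih, List.mem_cons, or_and_right, exists_or]

lemma bigU_append (A B : List (Set M)) :
    (A ++ B).foldr (· ∪ ·) ∅ = A.foldr (· ∪ ·) ∅ ∪ B.foldr (· ∪ ·) ∅ := by
  ext y
  simp only [Set.mem_union, mem_bigU, List.mem_append]
  constructor
  · rintro ⟨T, (h | h), hy⟩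
    exacts [Or.inl ⟨T, h, hy⟩, Or.inr ⟨T, h, hy⟩]
  · rintro (⟨T, h, hy⟩ | ⟨T, h, hy⟩)
    exacts [⟨T, Or.inl h, hy⟩, ⟨T, Or.inr h, hy⟩]

lemma bigU_sdiff (vs : List (Set M)) (T : Set M) :
    (vs.map (· \ T)).foldr (· ∪ ·) ∅ = vs.foldr (· ∪ ·) ∅ \ T := by
  induction vs with
  | nil => simp
  | cons A vs ih => simp only [List.map_cons, List.foldr_cons, ih, Set.union_diff_distrib]

lemma bigU_eq_iUnion (us : List (Set M)) :
    us.foldr (· ∪ ·) ∅ = ⋃ i : Fin us.length, us.get i := by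
  ext y
  simp only [mem_bigU, Set.mem_iUnion]
  constructor
  · rintro ⟨T, hT, hy⟩
    obtain ⟨i, rfl⟩ := List.get_of_mem hT
    exact ⟨i, hy⟩
  · rintro ⟨i, hy⟩
    exact ⟨us.get i, List.get_mem us i, hy⟩

lemma DsetM_bigU {Qs : Set M} {NL : List (Set M)} (h : ∀ T ∈ NL, DsetM (F := F) Qs T) :
    DsetM (F := F) Qs (NL.foldr (· ∪ ·) ∅) := by
  induction NL with
  | nil => exact DsetM_empty
  | cons T NL ih =>
      exact (h T (List.mem_cons_self)).union
        (ih (fun A hA => h A (List.mem_cons_of_mem _ hA)))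

lemma struct_T (hsmul : ∀ (c : F) (x : M), 0 < c → 0 < x → 0 < c • x)
    {T : Set M} (h : DsetM (F := F) (Q : Set M) T) :
    ∃ (X : Finset M) (NL : List (Set M)),
      (∀ N ∈ NL, NearInterval M (Q : Set M) N) ∧
      T = ↑X ∪ NL.foldr (· ∪ ·) ∅ ∧
      ↑X ⊆ T ∧ DsetM (F := F) (Q : Set M) (NL.foldr (· ∪ ·) ∅) ∧
      NL.foldr (· ∪ ·) ∅ ⊆ T := by
  obtain ⟨lss, hlss⟩ := h
  have hT : T = (lss.map (cellM (Q : Set M))).foldr (· ∪ ·) ∅ := by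
    ext y
    have h0 : y ∈ T ↔ (fun _ : Fin 1 => y) ∈ {x : Fin 1 → M | x 0 ∈ T} := Iff.rfl
    rw [h0, hlss]
    simp only [Set.mem_setOf_eq, mem_bigU, List.mem_map]
    constructor
    · rintro ⟨ls, hls, hy⟩
      exact ⟨cellM (Q : Set M) ls, ⟨ls, hls, rfl⟩, hy⟩
    · rintro ⟨_, ⟨ls, hls, rfl⟩, hy⟩
      exact ⟨ls, hls, hy⟩
  clear hlss
  subst hT
  induction lss with
  | nil => exact ⟨∅, [], by simp, by simp, by simp, DsetM_empty, by simp⟩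
  | cons ls lss ih =>
      obtain ⟨X', NL', hN', hrep', hXsub', hD', hUsub'⟩ := ih
      obtain ⟨Xc, NLc, hNc, hrepc, hXsubc, hDc⟩ := cell1_struct (Q := Q) hsmul ls
      refine ⟨Xc ∪ X', NLc ++ NL', ?_, ?_, ?_, ?_, ?_⟩
      · intro N hN
        rcases List.mem_append.1 hN with h | h
        exacts [hNc N h, hN' N h]
      · simp only [List.map_cons, List.foldr_cons, bigU_append]
        rw [hrepc, hrep']
        push_cast
        ext y
        simp only [Set.mem_union]
        tauto
      · simp only [List.map_cons, List.foldr_cons]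
        push_cast
        exact Set.union_subset (hXsubc.trans Set.subset_union_left)
          (hXsub'.trans Set.subset_union_right)
      · rw [bigU_append]
        refine DsetM.union ?_ hD'
        rcases hDc with h | h
        · rw [h]; exact DsetM_empty
        · rw [h]; exact DsetM_cellM ls
      · rw [bigU_append]
        simp only [List.map_cons, List.foldr_cons]
        refine Set.union_subset ?_ (hUsub'.trans Set.subset_union_right)
        rcases hDc with h | h
        · rw [h]; exact Set.empty_subset _
        · rw [h]; exact Set.subset_union_left

end Endgame

section Final
variable {Q : Submodule F M}

lemma aeval_fin1 (c : Fin 1 → F) (m z : M) : aeval c m (fun _ : Fin 1 => z) = c 0 • z + m := by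
  simp [aeval, Fin.sum_univ_one]

lemma disjointify (f : M → M) :
    ∀ (ws : List (Set M)), (∀ T ∈ ws, DsetM (F := F) (Q : Set M) T) →
      (∀ T ∈ ws, ∃ (a : F) (c : M), ∀ m ∈ T, f m = a • m + c) →
      ∃ vs : List (Set M), (∀ T ∈ vs, DsetM (F := F) (Q : Set M) T) ∧
        (∀ T ∈ vs, ∃ (a : F) (c : M), ∀ m ∈ T, f m = a • m + c) ∧
        List.Pairwise Disjoint vs ∧
        vs.foldr (· ∪ ·) ∅ = ws.foldr (· ∪ ·) ∅ := by
  intro ws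
  induction ws with
  | nil => exact fun _ _ => ⟨[], by simp, by simp, List.Pairwise.nil, rfl⟩
  | cons T ws ih =>
      intro hD hA
      obtain ⟨vs, hvD, hvA, hvP, hvU⟩ :=
        ih (fun A hA' => hD A (List.mem_cons_of_mem _ hA'))
          (fun A hA' => hA A (List.mem_cons_of_mem _ hA'))
      have hTD := hD T (List.mem_cons_self)
      refine ⟨T :: vs.map (· \ T), ?_, ?_, ?_, ?_⟩
      · intro A hA'
        rcases List.mem_cons.1 hA' with rfl | hA'
        · exact hTD
        · rw [List.mem_map] at hA'
          obtain ⟨B, hB, rfl⟩ := hA'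
          exact DsetM.sdiff (hvD B hB) hTD
      · intro A hA'
        rcases List.mem_cons.1 hA' with rfl | hA'
        · exact hA A (List.mem_cons_self)
        · rw [List.mem_map] at hA'
          obtain ⟨B, hB, rfl⟩ := hA'
          obtain ⟨a, c, hac⟩ := hvA B hB
          exact ⟨a, c, fun m hm => hac m hm.1⟩
      · refine List.Pairwise.cons ?_ ?_
        · intro A hA'
          rw [List.mem_map] at hA'
          obtain ⟨B, hB, rfl⟩ := hA'
          exact Set.disjoint_sdiff_right
        · exact (List.pairwise_map).2 (hvP.imp (fun h => h.mono Set.diff_subset Set.diff_subset))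
      · simp only [List.foldr_cons, bigU_sdiff, hvU]
        rw [Set.union_diff_self]

lemma struct_list (hsmul : ∀ (c : F) (x : M), 0 < c → 0 < x → 0 < c • x) :
    ∀ (vs : List (Set M)), (∀ T ∈ vs, DsetM (F := F) (Q : Set M) T) →
      ∃ (X : Finset M) (us : List (Set M)),
        List.Forall₂ (fun U T => U ⊆ T ∧ DsetM (F := F) (Q : Set M) U ∧
          ∃ (m' : ℕ) (V : Fin m' → Set M),
            (∀ i, NearInterval M (Q : Set M) (V i)) ∧ U = ⋃ i, V i) us vs ∧
        (↑X ∪ us.foldr (· ∪ ·) ∅ = vs.foldr (· ∪ ·) ∅) ∧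
        (↑X : Set M) ⊆ vs.foldr (· ∪ ·) ∅ := by
  intro vs
  induction vs with
  | nil => exact fun _ => ⟨∅, [], List.Forall₂.nil, by simp, by simp⟩
  | cons T vs ih =>
      intro hD
      obtain ⟨X', us', hF2, hU', hX'⟩ := ih (fun A hA => hD A (List.mem_cons_of_mem _ hA))
      obtain ⟨XT, NL, hNear, hrep, hXsub, hDU, hUsub⟩ :=
        struct_T (Q := Q) hsmul (hD T (List.mem_cons_self))
      refine ⟨XT ∪ X', (NL.foldr (· ∪ ·) ∅) :: us', ?_, ?_, ?_⟩
      · refine List.Forall₂.cons ⟨hUsub, hDU, NL.length, fun i => NL.get i, ?_, ?_⟩ hF2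
        · intro i
          exact hNear _ (List.get_mem NL i)
        · exact bigU_eq_iUnion NL
      · simp only [List.foldr_cons]
        push_cast
        rw [hrep, ← hU']
        ext y
        simp only [Set.mem_union]
        tauto
      · simp only [List.foldr_cons]
        push_cast
        exact Set.union_subset (hXsub.trans Set.subset_union_left)
          (hX'.trans Set.subset_union_right)

end Final

end Dev

/-- Let `S ⊆ M` be definable and `f : S → M` have definable graph.
Then there are a finite set `X ⊆ S` and finitely many pairwise disjoint definable sets
`U₁, …, U_k`, each a finite union of near-intervals, such that `S = X ∪ U₁ ∪ ⋯ ∪ U_k`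
and on each `U_ℓ` the function `f` is given by `x ↦ α_ℓ • x + c_ℓ`. -/
theorem statement12
    (hsmul : ∀ (c : F) (x : M), 0 < c → 0 < x → 0 < c • x)
    (one : M) (hone : 0 < one)
    (Q : Submodule F M) (hQproper : (Q : Set M) ≠ Set.univ) (honeQ : one ∈ Q)
    (hQdense : ∀ a b : M, a < b → ∃ q ∈ Q, a < q ∧ q < b)
    (S : Set M) (hS : POVSDefinable1 F M one (Q : Set M) S)
    (f : M → M)
    (hf : POVSDefinable F M one (Q : Set M) {x : Fin 2 → M | x 0 ∈ S ∧ f (x 0) = x 1}) :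
    ∃ (X : Finset M) (k : ℕ) (U : Fin k → Set M),
      (X : Set M) ⊆ S ∧
      (∀ ℓ, POVSDefinable1 F M one (Q : Set M) (U ℓ)) ∧
      (Pairwise fun i j => Disjoint (U i) (U j)) ∧
      (∀ ℓ, ∃ (m : ℕ) (V : Fin m → Set M),
        (∀ i, NearInterval M (Q : Set M) (V i)) ∧ U ℓ = ⋃ i, V i) ∧
      S = (X : Set M) ∪ ⋃ ℓ, U ℓ ∧
      (∀ ℓ, ∃ (α : F) (c : M), ∀ x ∈ U ℓ, f x = α • x + c) := by
  classical
  letI := LPStruc F M one (Q : Set M)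
  obtain ⟨φ, hφ⟩ := hf
  have hGInD0 := formula_InD (F := F) (M := M) one hone hsmul Q hQproper hQdense
    (α := Fin 2) (l := 0) φ
  set G : Set (Fin 2 → M) := {x : Fin 2 → M | x 0 ∈ S ∧ f (x 0) = x 1} with hG
  set e1 : (Fin 2 ⊕ Fin 0) ≃ Fin 2 := Equiv.sumEmpty (Fin 2) (Fin 0) with he1
  have h1 : InD F (Q : Set M) {x : Fin 2 → M | x ∘ e1 ∈
      {p : (Fin 2 ⊕ Fin 0) → M | BoundedFormula.Realize φ (p ∘ Sum.inl) (p ∘ Sum.inr)}} :=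
    InD_comp e1 hGInD0
  have hG2 : {x : Fin 2 → M | x ∘ e1 ∈
      {p : (Fin 2 ⊕ Fin 0) → M | BoundedFormula.Realize φ (p ∘ Sum.inl) (p ∘ Sum.inr)}} = G := by
    rw [hφ]
    ext x
    have hx1 : (x ∘ e1) ∘ Sum.inl = x := by
      funext i
      simp [he1]
    simp only [Set.mem_setOf_eq]
    rw [hx1, Subsingleton.elim ((x ∘ e1) ∘ Sum.inr) (default : Fin 0 → M)]
    exact Iff.rfl
  rw [hG2] at h1
  set GS : Set ((Fin 1 ⊕ Fin 1) → M) := {z | z ∘ ⇑(finSumFinEquiv (m := 1) (n := 1)).symm ∈ G} with hGSdef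
  have hGSInD : InD F (Q : Set M) GS := InD_comp (finSumFinEquiv (m := 1) (n := 1)).symm h1
  have hsymm0 : ((finSumFinEquiv (m := 1) (n := 1)).symm (0 : Fin 2)) = Sum.inl (0 : Fin 1) := by
    rw [Equiv.symm_apply_eq]
    decide
  have hsymm1 : ((finSumFinEquiv (m := 1) (n := 1)).symm (1 : Fin 2)) = Sum.inr (0 : Fin 1) := by
    rw [Equiv.symm_apply_eq]
    decide
  have mem_GS : ∀ (m y : M),
      (Sum.elim (fun _ : Fin 1 => m) (fun _ : Fin 1 => y) ∈ GS) ↔ (m ∈ S ∧ f m = y) := by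
    intro m y
    have h0 : (Sum.elim (fun _ : Fin 1 => m) (fun _ : Fin 1 => y) ∘ ⇑(finSumFinEquiv (m := 1) (n := 1)).symm) 0
        = m := by rw [Function.comp_apply, hsymm0]; rfl
    have h1' : (Sum.elim (fun _ : Fin 1 => m) (fun _ : Fin 1 => y) ∘ ⇑(finSumFinEquiv (m := 1) (n := 1)).symm) 1
        = y := by rw [Function.comp_apply, hsymm1]; rfl
    show (Sum.elim (fun _ : Fin 1 => m) (fun _ : Fin 1 => y) ∘ ⇑(finSumFinEquiv (m := 1) (n := 1)).symm) ∈ G ↔ _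
    rw [hG]
    simp only [Set.mem_setOf_eq, h0, h1']
  obtain ⟨lss, hlssG⟩ := hGSInD
  set Wm : List (Lit F M (Fin 1 ⊕ Fin 1)) → Set M := fun ls =>
    {m : M | ∃ y : M, Sum.elim (fun _ : Fin 1 => m) (fun _ : Fin 1 => y)
      ∈ cellSet (Q : Set M) ls} with hWm
  have hcellGS : ∀ ls ∈ lss, cellSet (Q : Set M) ls ⊆ GS := by
    intro ls hls z hz
    rw [hlssG]
    exact ⟨ls, hls, hz⟩
  have hWmS : ∀ ls ∈ lss, Wm ls ⊆ S := by
    rintro ls hls m ⟨y, hy⟩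
    exact ((mem_GS m y).1 (hcellGS ls hls hy)).1
  have hSeq : S = (lss.map Wm).foldr (· ∪ ·) ∅ := by
    ext m
    simp only [mem_bigU, List.mem_map]
    constructor
    · intro hm
      have hmem : Sum.elim (fun _ : Fin 1 => m) (fun _ : Fin 1 => f m) ∈ GS :=
        (mem_GS m (f m)).2 ⟨hm, rfl⟩
      rw [hlssG] at hmem
      obtain ⟨ls, hls, hcell⟩ := hmem
      exact ⟨Wm ls, ⟨ls, hls, rfl⟩, ⟨f m, hcell⟩⟩
    · rintro ⟨_, ⟨ls, hls, rfl⟩, hm⟩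
      exact hWmS ls hls hm
  have hWmD : ∀ T ∈ lss.map Wm, DsetM (F := F) (Q : Set M) T := by
    rintro T hT
    rw [List.mem_map] at hT
    obtain ⟨ls, hls, rfl⟩ := hT
    show InD F (Q : Set M) {x : Fin 1 → M | x 0 ∈ Wm ls}
    have hrw : {x : Fin 1 → M | x 0 ∈ Wm ls}
        = {x : Fin 1 → M | ∃ y, Sum.elim x (fun _ => y) ∈ cellSet (Q : Set M) ls} := by
      ext x
      simp only [Set.mem_setOf_eq, hWm]
      rw [const_eq_self x]
    rw [hrw]
    exact proj_cell (one := one) hsmul hone hQdense hQproper ls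
  have hWmA : ∀ T ∈ lss.map Wm, ∃ (a : F) (c : M), ∀ m ∈ T, f m = a • m + c := by
    rintro T hT
    rw [List.mem_map] at hT
    obtain ⟨ls, hls, rfl⟩ := hT
    cases hqe : ls.filterMap eqOf with
    | cons p ps =>
        refine ⟨p.1 0, p.2, ?_⟩
        rintro m ⟨y, hy⟩
        have h6 := ((mem_cell_elim hsmul ls _ y).1 hy).2.2.2.2.2 p
          (by rw [hqe]; exact List.mem_cons_self)
        have hfm : f m = y := ((mem_GS m y).1 (hcellGS ls hls hy)).2
        rw [hfm, h6, aeval_fin1]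
    | nil =>
        refine ⟨0, 0, ?_⟩
        rintro m ⟨y, hy⟩
        exfalso
        obtain ⟨h1c, h2c, h3c, h4c, h5c, _⟩ := (mem_cell_elim hsmul ls _ y).1 hy
        obtain ⟨y', hne, g1, g2, g3, g4⟩ := second_solution (one := one) hone hQdense
          ((ls.filterMap lowOf).map (fun p => aeval p.1 p.2 (fun _ : Fin 1 => m)))
          ((ls.filterMap upOf).map (fun p => aeval p.1 p.2 (fun _ : Fin 1 => m)))
          ((ls.filterMap sOf).map (fun p => aeval p.1 p.2 (fun _ : Fin 1 => m)))
          ((ls.filterMap rOf).map (fun p => aeval p.1 p.2 (fun _ : Fin 1 => m))) y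
          (by intro l hl; rw [List.mem_map] at hl; obtain ⟨p, hp, rfl⟩ := hl; exact h2c p hp)
          (by intro u hu; rw [List.mem_map] at hu; obtain ⟨p, hp, rfl⟩ := hu; exact h3c p hp)
          (by intro s hs; rw [List.mem_map] at hs; obtain ⟨p, hp, rfl⟩ := hs; exact h4c p hp)
          (by intro r hr; rw [List.mem_map] at hr; obtain ⟨p, hp, rfl⟩ := hr; exact h5c p hp)
        have hy' : Sum.elim (fun _ : Fin 1 => m) (fun _ : Fin 1 => y')
            ∈ cellSet (Q : Set M) ls := by
          refine (mem_cell_elim hsmul ls _ y').2 ⟨h1c, ?_, ?_, ?_, ?_, ?_⟩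
          · intro p hp; exact g1 _ (List.mem_map.2 ⟨p, hp, rfl⟩)
          · intro p hp; exact g2 _ (List.mem_map.2 ⟨p, hp, rfl⟩)
          · intro p hp; exact g3 _ (List.mem_map.2 ⟨p, hp, rfl⟩)
          · intro p hp; exact g4 _ (List.mem_map.2 ⟨p, hp, rfl⟩)
          · intro p hp; rw [hqe] at hp; exact absurd hp List.not_mem_nil
        have hfy : f m = y := ((mem_GS m y).1 (hcellGS ls hls hy)).2
        have hfy' : f m = y' := ((mem_GS m y').1 (hcellGS ls hls hy')).2
        exact hne (hfy' ▸ hfy)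
  obtain ⟨vs, hvD, hvA, hvP, hvU⟩ := disjointify (Q := Q) f (lss.map Wm) hWmD hWmA
  obtain ⟨X, us, hF2, hXU, hXsub⟩ := struct_list (Q := Q) hsmul vs hvD
  obtain ⟨hlen, hget⟩ := List.forall₂_iff_get.1 hF2
  have hSvs : S = vs.foldr (· ∪ ·) ∅ := by rw [hSeq, ← hvU]
  refine ⟨X, us.length, fun i => us.get i, ?_, ?_, ?_, ?_, ?_, ?_⟩
  · intro z hz
    rw [hSvs]
    exact hXsub hz
  · intro ℓ
    have hD : DsetM (F := F) (Q : Set M) (us.get ℓ) :=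
      (hget ℓ.1 ℓ.2 (by rw [← hlen]; exact ℓ.2)).2.1
    exact InD_definable (F := F) one (Q : Set M) hD
  · have hvP' := List.pairwise_iff_get.1 hvP
    have hsubget : ∀ (i : Fin us.length),
        us.get i ⊆ vs.get ⟨i.1, by rw [← hlen]; exact i.2⟩ :=
      fun i => (hget i.1 i.2 (by rw [← hlen]; exact i.2)).1
    intro i j hne
    rcases lt_or_gt_of_ne hne with h | h
    · exact (hvP' ⟨i.1, by rw [← hlen]; exact i.2⟩ ⟨j.1, by rw [← hlen]; exact j.2⟩
        (Fin.mk_lt_mk.2 h)).mono (hsubget i) (hsubget j)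
    · exact ((hvP' ⟨j.1, by rw [← hlen]; exact j.2⟩ ⟨i.1, by rw [← hlen]; exact i.2⟩
        (Fin.mk_lt_mk.2 h)).mono (hsubget j) (hsubget i)).symm
  · intro ℓ
    exact (hget ℓ.1 ℓ.2 (by rw [← hlen]; exact ℓ.2)).2.2
  · rw [hSvs, ← hXU]
    congr 1
    exact bigU_eq_iUnion us
  · intro ℓ
    have h1 := (hget ℓ.1 ℓ.2 (by rw [← hlen]; exact ℓ.2)).1
    obtain ⟨a, c, hac⟩ := hvA (vs.get ⟨ℓ.1, by rw [← hlen]; exact ℓ.2⟩)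
      (List.get_mem vs _)
    exact ⟨a, c, fun x hx => hac x (h1 hx)⟩
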